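/- arXiv:2011.07540 — 5 statements merged into one kernel-verified Lean document; each statement's English description precedes it below -/
import Mathlib

section
/- Let m ≥ 1 and ℓ be integers. For all τ ∈ ℍ and z ∈ ℂ, ϑ_{m,ℓ}(−1/τ, z/τ) = √(τ/(2mi)) · exp(2πimz²/τ) · Σ_{ℓ' = 0}^{2m−1} exp(−πiℓℓ'/m) · ϑ_{m,ℓ'}(τ, z), where √ denotes the principal branch of the square root (note Re(τ/(2mi)) > 0 for τ ∈ ℍ). -/
open Complex

/-- The Jacobi theta function `ϑ_{m,ℓ}(τ, z) = Σ_{r ∈ ℤ, r ≡ ℓ mod 2m} e(r²τ/(4m) + rz)`. -/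
noncomputable def jacobiThetaML (m ℓ : ℤ) (τ z : ℂ) : ℂ :=
  ∑' r : {r : ℤ // r ≡ ℓ [ZMOD 2 * m]},
    Complex.exp (2 * Real.pi * Complex.I *
      (((r : ℤ) : ℂ) ^ 2 * τ / (4 * m) + ((r : ℤ) : ℂ) * z))

/-- residues equiv -/
def resEquiv (N a : ℤ) (hN : N ≠ 0) : ℤ ≃ {r : ℤ // r ≡ a [ZMOD N]} where
  toFun n := ⟨a + N * n, Int.ModEq.symm (Int.modEq_iff_dvd.mpr ⟨n, by ring⟩)⟩
  invFun r := ((r : ℤ) - a) / N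
  left_inv n := by simp [Int.mul_ediv_cancel_left _ hN]
  right_inv r := by
    obtain ⟨k, hk⟩ := Int.modEq_iff_dvd.mp r.2.symm
    ext
    simp only [hk, Int.mul_ediv_cancel_left _ hN]
    omega

def finIntEquiv (N : ℕ) (hN : 0 < N) : Fin N × ℤ ≃ ℤ where
  toFun p := (p.1 : ℤ) + N * p.2
  invFun k := (⟨(k % N).toNat, by
      have h1 : (0:ℤ) < N := by exact_mod_cast hN
      have := Int.emod_nonneg k h1.ne'
      have := Int.emod_lt_of_pos k h1
      omega⟩, k / N)
  right_inv k := by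
    have h1 : (0:ℤ) < N := by exact_mod_cast hN
    have := Int.emod_nonneg k h1.ne'
    simp only [Int.toNat_of_nonneg this]
    have := Int.emod_add_mul_ediv k (N:ℤ)
    omega
  left_inv p := by
    have h1 : (0:ℤ) < N := by exact_mod_cast hN
    have hb : ((p.1 : ℤ)) % N = p.1 := Int.emod_eq_of_lt (by positivity) (by exact_mod_cast p.1.2)
    have hb2 : ((p.1 : ℤ)) / N = 0 := Int.ediv_eq_zero_of_lt (by positivity) (by exact_mod_cast p.1.2)
    ext
    · simp [Int.add_mul_emod_self_left, hb]
    · simp [Int.add_mul_ediv_left _ _ h1.ne', hb2]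

lemma term_eq (m a n : ℤ) (hm : (m:ℂ) ≠ 0) (τ z : ℂ) :
    Complex.exp (2 * Real.pi * Complex.I *
        (((a + 2*m*n : ℤ) : ℂ)^2 * τ/(4*m) + ((a + 2*m*n : ℤ) : ℂ) * z)) =
    Complex.exp (2 * Real.pi * Complex.I * ((a:ℂ)^2 * τ/(4*m) + (a:ℂ) * z)) *
      jacobiTheta₂_term n ((a:ℂ)*τ + 2*(m:ℂ)*z) (2*(m:ℂ)*τ) := by
  rw [jacobiTheta₂_term, ← Complex.exp_add]
  congr 1
  push_cast
  field_simp
  ring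

lemma thetaML_eq (m a : ℤ) (hm0 : m ≠ 0) (τ z : ℂ) :
    jacobiThetaML m a τ z =
      Complex.exp (2 * Real.pi * Complex.I * ((a:ℂ)^2 * τ/(4*m) + (a:ℂ) * z)) *
        jacobiTheta₂ ((a:ℂ)*τ + 2*(m:ℂ)*z) (2*(m:ℂ)*τ) := by
  have hm : (m:ℂ) ≠ 0 := Int.cast_ne_zero.mpr hm0
  rw [jacobiThetaML, ← (resEquiv (2*m) a (by omega)).tsum_eq, jacobiTheta₂, ← tsum_mul_left]
  refine tsum_congr fun n ↦ ?_
  have : ((resEquiv (2*m) a (by omega) n : ℤ)) = a + 2*m*n := rfl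
  rw [this]
  exact term_eq m a n hm τ z

lemma term_shift (m ℓ b n : ℤ) (hm : (m:ℂ) ≠ 0) (τ z : ℂ) :
    jacobiTheta₂_term (b + 2*m*n) (z - (ℓ:ℂ)/(2*(m:ℂ))) (τ/(2*(m:ℂ))) =
      Complex.exp (-(Real.pi:ℂ) * Complex.I * (ℓ:ℂ) * (b:ℂ) / m) *
        Complex.exp (2 * Real.pi * Complex.I *
          (((b + 2*m*n : ℤ):ℂ)^2 * τ/(4*m) + ((b + 2*m*n:ℤ):ℂ) * z)) := by
  have h1 : Complex.exp (((-ℓ*n : ℤ):ℂ) * (2 * Real.pi * Complex.I)) = 1 :=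
    Complex.exp_int_mul_two_pi_mul_I _
  have key : (2 * (Real.pi:ℂ) * Complex.I * (((b + 2*m*n : ℤ)):ℂ) * (z - (ℓ:ℂ)/(2*(m:ℂ)))
        + (Real.pi:ℂ) * Complex.I * (((b + 2*m*n : ℤ)):ℂ)^2 * (τ/(2*(m:ℂ))))
      = (-(Real.pi:ℂ) * Complex.I * (ℓ:ℂ) * (b:ℂ) / m
          + 2 * Real.pi * Complex.I *
            (((b + 2*m*n : ℤ):ℂ)^2 * τ/(4*m) + ((b + 2*m*n:ℤ):ℂ) * z))
        + ((-ℓ*n : ℤ):ℂ) * (2 * Real.pi * Complex.I) := by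
    push_cast
    field_simp
    ring
  rw [jacobiTheta₂_term, key, Complex.exp_add, h1, mul_one, Complex.exp_add]

set_option maxHeartbeats 1000000 in
lemma sum_eq_theta (m ℓ : ℤ) (hm : 1 ≤ m) (τ : ℂ) (hτ : 0 < τ.im) (z : ℂ) :
    jacobiTheta₂ (z - (ℓ:ℂ)/(2*(m:ℂ))) (τ/(2*(m:ℂ))) =
      ∑ l' ∈ Finset.range (2 * m).toNat,
        Complex.exp (-(Real.pi : ℂ) * Complex.I * (ℓ : ℂ) * (l' : ℂ) / m) *
          jacobiThetaML m (l' : ℤ) τ z := by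
  have hm0 : m ≠ 0 := by omega
  have hmC : (m:ℂ) ≠ 0 := Int.cast_ne_zero.mpr hm0
  have hmR : (0:ℝ) < (m:ℝ) := by exact_mod_cast hm
  have hN : 0 < (2*m).toNat := by omega
  have hNZ : (((2*m).toNat : ℤ)) = 2*m := by omega
  have hτ₀ : 0 < (τ/(2*(m:ℂ))).im := by
    have h2m : (2*(m:ℂ)) = ((2*(m:ℝ) : ℝ):ℂ) := by push_cast; ring
    rw [h2m, Complex.div_ofReal_im]
    positivity
  have him2 : 0 < (2*(m:ℂ)*τ).im := by
    have h2m : (2*(m:ℂ)*τ) = ((2*(m:ℝ):ℝ):ℂ) * τ := by push_cast; ring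
    rw [h2m, Complex.im_ofReal_mul]
    positivity
  have H := hasSum_jacobiTheta₂_term (z - (ℓ:ℂ)/(2*(m:ℂ))) hτ₀
  have H2 : HasSum (fun p : Fin (2*m).toNat × ℤ ↦
      jacobiTheta₂_term (finIntEquiv (2*m).toNat hN p) (z - (ℓ:ℂ)/(2*(m:ℂ))) (τ/(2*(m:ℂ))))
      (jacobiTheta₂ (z - (ℓ:ℂ)/(2*(m:ℂ))) (τ/(2*(m:ℂ)))) :=
    ((finIntEquiv (2*m).toNat hN).hasSum_iff).mpr H
  have hfib : ∀ b : Fin (2*m).toNat, HasSum (fun n : ℤ ↦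
      jacobiTheta₂_term (finIntEquiv (2*m).toNat hN (b, n)) (z - (ℓ:ℂ)/(2*(m:ℂ))) (τ/(2*(m:ℂ))))
      (Complex.exp (-(Real.pi : ℂ) * Complex.I * (ℓ : ℂ) * ((b:ℕ) : ℂ) / m) *
        jacobiThetaML m ((b:ℕ) : ℤ) τ z) := by
    intro b
    have base := (hasSum_jacobiTheta₂_term ((((b:ℕ):ℤ):ℂ)*τ + 2*(m:ℂ)*z) him2).mul_left
      (Complex.exp (-(Real.pi:ℂ) * Complex.I * (ℓ:ℂ) * (((b:ℕ):ℤ):ℂ) / m) *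
        Complex.exp (2 * Real.pi * Complex.I *
          ((((b:ℕ):ℤ):ℂ)^2 * τ/(4*m) + (((b:ℕ):ℤ):ℂ) * z)))
    have hfun : ∀ n : ℤ, jacobiTheta₂_term (finIntEquiv (2*m).toNat hN (b, n))
          (z - (ℓ:ℂ)/(2*(m:ℂ))) (τ/(2*(m:ℂ)))
        = (Complex.exp (-(Real.pi:ℂ) * Complex.I * (ℓ:ℂ) * (((b:ℕ):ℤ):ℂ) / m) *
            Complex.exp (2 * Real.pi * Complex.I *
              ((((b:ℕ):ℤ):ℂ)^2 * τ/(4*m) + (((b:ℕ):ℤ):ℂ) * z))) *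
          jacobiTheta₂_term n ((((b:ℕ):ℤ):ℂ)*τ + 2*(m:ℂ)*z) (2*(m:ℂ)*τ) := by
      intro n
      have harg : (finIntEquiv (2*m).toNat hN (b, n) : ℤ) = ((b:ℕ):ℤ) + 2*m*n := by
        simp only [finIntEquiv, Equiv.coe_fn_mk, hNZ]
      rw [harg, term_shift m ℓ ((b:ℕ):ℤ) n hmC τ z,
        term_eq m ((b:ℕ):ℤ) n hmC τ z, ← mul_assoc]
    rw [funext hfun]
    convert base using 1
    · rfl
    rw [thetaML_eq m ((b:ℕ):ℤ) hm0 τ z]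
    push_cast
    ring
  have Hfin := H2.prod_fiberwise hfib
  rw [← Hfin.tsum_eq, tsum_fintype]
  have := Fin.sum_univ_eq_sum_range (fun l' : ℕ ↦
    Complex.exp (-(Real.pi : ℂ) * Complex.I * (ℓ : ℂ) * ((l' : ℕ) : ℂ) / m) *
      jacobiThetaML m ((l' : ℕ) : ℤ) τ z) ((2*m).toNat)
  exact this

/-- Modular inversion behaviour of `ϑ_{m,ℓ}`:
`ϑ_{m,ℓ}(−1/τ, z/τ) = √(τ/(2mi)) · exp(2πimz²/τ) · Σ_{ℓ'=0}^{2m−1} exp(−πiℓℓ'/m) ϑ_{m,ℓ'}(τ, z)`,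
where the square root is the principal branch (realized by the principal power `w ^ (1/2)`). -/
theorem jacobiThetaML_S (m ℓ : ℤ) (hm : 1 ≤ m) (τ : ℂ) (hτ : 0 < τ.im) (z : ℂ) :
    jacobiThetaML m ℓ (-1 / τ) (z / τ) =
      (τ / (2 * (m : ℂ) * Complex.I)) ^ ((1 : ℂ) / 2) *
        Complex.exp (2 * Real.pi * Complex.I * m * z ^ 2 / τ) *
        ∑ l' ∈ Finset.range (2 * m).toNat,
          Complex.exp (-(Real.pi : ℂ) * Complex.I * (ℓ : ℂ) * (l' : ℂ) / m) *
            jacobiThetaML m (l' : ℤ) τ z := by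
  have hm0 : m ≠ 0 := by omega
  have hmC : (m:ℂ) ≠ 0 := Int.cast_ne_zero.mpr hm0
  have hτ0 : τ ≠ 0 := fun h ↦ by simp [h] at hτ
  set z₀ : ℂ := z - (ℓ:ℂ)/(2*(m:ℂ)) with hz₀
  set τ₀ : ℂ := τ/(2*(m:ℂ)) with hτ₀def
  have h2m : (2*(m:ℂ)) ≠ 0 := by simp [hmC]
  have harg1 : (ℓ:ℂ)^2 * (-1/τ) / (4*m) + (ℓ:ℂ) * (z/τ) =
      (ℓ:ℂ)^2 * (-1/τ) / (4*m) + (ℓ:ℂ) * (z/τ) := rfl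
  have hargz : z₀ / τ₀ = (ℓ:ℂ)*(-1/τ) + 2*(m:ℂ)*(z/τ) := by
    rw [hz₀, hτ₀def]; field_simp; ring
  have hargτ : -1/τ₀ = 2*(m:ℂ)*(-1/τ) := by
    rw [hτ₀def]; field_simp
  have hbase : (-Complex.I*τ₀) ≠ 0 := by
    simp [hτ₀def, Complex.I_ne_zero, hτ0, h2m, div_eq_zero_iff]
  have hpow : ((-Complex.I*τ₀) ^ ((1:ℂ)/2)) ≠ 0 :=
    fun h ↦ hbase (Complex.cpow_eq_zero_iff _ _ |>.mp h).1
  have hfe := jacobiTheta₂_functional_equation z₀ τ₀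
  have he : Complex.exp ((Real.pi:ℂ)*Complex.I*z₀^2/τ₀) *
      Complex.exp (-(Real.pi:ℂ)*Complex.I*z₀^2/τ₀) = 1 := by
    rw [← Complex.exp_add]
    rw [show ((Real.pi:ℂ)*Complex.I*z₀^2/τ₀ + -(Real.pi:ℂ)*Complex.I*z₀^2/τ₀) = 0 by ring]
    exact Complex.exp_zero
  have hθ : jacobiTheta₂ (z₀/τ₀) (-1/τ₀)
      = (-Complex.I*τ₀) ^ ((1:ℂ)/2) * Complex.exp ((Real.pi:ℂ)*Complex.I*z₀^2/τ₀) *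
        jacobiTheta₂ z₀ τ₀ := by
    conv_rhs => rw [hfe]
    rw [show (-(Real.pi:ℂ) * Complex.I * z₀ ^ 2 / τ₀) = -((Real.pi:ℂ)*Complex.I*z₀^2/τ₀) by ring]
    calc jacobiTheta₂ (z₀/τ₀) (-1/τ₀)
        = (Complex.exp ((Real.pi:ℂ)*Complex.I*z₀^2/τ₀) *
            Complex.exp (-((Real.pi:ℂ)*Complex.I*z₀^2/τ₀))) *
          (((-Complex.I*τ₀) ^ ((1:ℂ)/2) * (1/(-Complex.I*τ₀) ^ ((1:ℂ)/2))) *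
            jacobiTheta₂ (z₀/τ₀) (-1/τ₀)) := by
          rw [show Complex.exp (-((Real.pi:ℂ)*Complex.I*z₀^2/τ₀))
              = Complex.exp (-(Real.pi:ℂ)*Complex.I*z₀^2/τ₀) by ring_nf]
          rw [he, mul_one_div_cancel hpow, one_mul, one_mul]
      _ = _ := by
          rw [show Complex.exp (-((Real.pi:ℂ)*Complex.I*z₀^2/τ₀))
              = Complex.exp (-(Real.pi:ℂ)*Complex.I*z₀^2/τ₀) by ring_nf]
          ring
  have hsum := sum_eq_theta m ℓ hm τ hτ z
  rw [thetaML_eq m ℓ hm0 (-1/τ) (z/τ), ← hargz, ← hargτ, hθ, ← hsum]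
  have hpowbase : τ / (2 * (m:ℂ) * Complex.I) = -Complex.I * τ₀ := by
    rw [hτ₀def, ← div_div, div_I]
    ring
  rw [hpowbase]
  have hexp : Complex.exp (2 * Real.pi * Complex.I *
        ((ℓ:ℂ)^2 * (-1/τ) / (4*(m:ℂ)) + (ℓ:ℂ) * (z/τ))) *
      Complex.exp ((Real.pi:ℂ)*Complex.I*z₀^2/τ₀)
      = Complex.exp (2 * Real.pi * Complex.I * (m:ℂ) * z ^ 2 / τ) := by
    rw [← Complex.exp_add]
    congr 1
    rw [hz₀, hτ₀def]
    have hτi : τ⁻¹ * τ = 1 := inv_mul_cancel₀ hτ0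
    have hmi : ((m:ℂ))⁻¹ * m = 1 := inv_mul_cancel₀ hmC
    field_simp [hτ0, hmC]
    ring_nf
  rw [← hexp]
  ring
end

section
/- Let k ∈ ℤ, let m ≥ 1 and ℓ be integers, and let h : ℍ → ℂ be twice continuously differentiable (as a function of (u, v) with τ = u + iv). For each fixed τ ∈ ℍ, the function Φ(τ, z) := h(τ) ϑ_{m,ℓ}(τ, z) satisfies (C^sk_{k,m} Φ)(τ, z) = 0 for all z ∈ ℂ if and only if 2iv(k − 1/2)(∂_τ h)(τ) + 4v²(∂_τ ∂_τ̄ h)(τ) = 0, where v = Im τ. -/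
open Complex ComplexConjugate

/-- Real partial derivative of `f : ℂ → ℂ` at `τ` in the direction `w`. -/
noncomputable def partialDeriv (w : ℂ) (f : ℂ → ℂ) (τ : ℂ) : ℂ := fderiv ℝ f τ w

/-- Wirtinger derivative `∂_τ f = (1/2)(∂f/∂u − i ∂f/∂v)` where `τ = u + iv`. -/
noncomputable def dTau (f : ℂ → ℂ) : ℂ → ℂ :=
  fun τ => (1 / 2) * (partialDeriv 1 f τ - Complex.I * partialDeriv Complex.I f τ)

/-- Wirtinger derivative `∂_τ̄ f = (1/2)(∂f/∂u + i ∂f/∂v)` where `τ = u + iv`. -/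
noncomputable def dTauBar (f : ℂ → ℂ) : ℂ → ℂ :=
  fun τ => (1 / 2) * (partialDeriv 1 f τ + Complex.I * partialDeriv Complex.I f τ)

/-- The heat operator `L_m = 8πim ∂_τ − ∂²/∂z²` acting on `Φ(τ, z)`. -/
noncomputable def heatOp (m : ℤ) (Φ : ℂ → ℂ → ℂ) (τ z : ℂ) : ℂ :=
  8 * Real.pi * Complex.I * (m : ℂ) * dTau (fun w => Φ w z) τ - iteratedDeriv 2 (Φ τ) z

/-- The skew Casimir operator
`C^sk_{k,m} = −(iv²/(πm)) v^{1/2−k} ∘ ∂_τ̄ ∘ v^{k−1/2} ∘ L_m`, `v = Im τ`. -/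
noncomputable def skewCasimir (k m : ℤ) (Φ : ℂ → ℂ → ℂ) (τ z : ℂ) : ℂ :=
  -(Complex.I * (τ.im : ℂ) ^ 2 / (Real.pi * m)) *
    ((τ.im ^ ((1 : ℝ) / 2 - (k : ℝ)) : ℝ) : ℂ) *
    dTauBar (fun w => ((w.im ^ ((k : ℝ) - 1 / 2) : ℝ) : ℂ) * heatOp m Φ w z) τ

/-- The weight-`κ` hyperbolic Laplacian
`Δ_κ = −v²(∂²/∂u² + ∂²/∂v²) + iκv(∂/∂u + i ∂/∂v)`, `τ = u + iv`. -/
noncomputable def hypLaplacian (κ : ℝ) (f : ℂ → ℂ) (τ : ℂ) : ℂ :=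
  -(τ.im : ℂ) ^ 2 *
      (partialDeriv 1 (partialDeriv 1 f) τ +
        partialDeriv Complex.I (partialDeriv Complex.I f) τ) +
    Complex.I * (κ : ℂ) * (τ.im : ℂ) *
      (partialDeriv 1 f τ + Complex.I * partialDeriv Complex.I f τ)

noncomputable section
namespace SkewAux
open Real



/-- Real exponent coefficients. -/
def ca (m r : ℤ) : ℝ := 2 * Real.pi * r^2 / (4 * m)
def cb (r : ℤ) : ℝ := 2 * Real.pi * r

/-- General term: `c r * exp(2πi(r² w/(4m) + r z))` as a function of `p = (w, z)`. -/
def term (m : ℤ) (c : ℤ → ℂ) (r : ℤ) (p : ℂ × ℂ) : ℂ :=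
  c r * Complex.exp (2 * Real.pi * Complex.I * (((r : ℤ) : ℂ) ^ 2 * p.1 / (4 * m) + ((r : ℤ) : ℂ) * p.2))

lemma term_eq (m : ℤ) (c : ℤ → ℂ) (r : ℤ) (p : ℂ × ℂ) :
    term m c r p = c r * Complex.exp ((ca m r : ℂ) * Complex.I * p.1 + (cb r : ℂ) * Complex.I * p.2) := by
  rw [term]
  congr 2
  rw [ca, cb]; push_cast; ring

/-- The linear part of the exponent. -/
def expL (m r : ℤ) : ℂ × ℂ →L[ℂ] ℂ :=
  ((ca m r : ℂ) * Complex.I) • ContinuousLinearMap.fst ℂ ℂ ℂ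
    + ((cb r : ℂ) * Complex.I) • ContinuousLinearMap.snd ℂ ℂ ℂ

lemma expL_apply (m r : ℤ) (q : ℂ × ℂ) :
    expL m r q = (ca m r : ℂ) * Complex.I * q.1 + (cb r : ℂ) * Complex.I * q.2 := by
  simp [expL, smul_eq_mul]

def termFDeriv (m : ℤ) (c : ℤ → ℂ) (r : ℤ) (p : ℂ × ℂ) : ℂ × ℂ →L[ℂ] ℂ :=
  term m c r p • expL m r

lemma hasFDerivAt_term (m : ℤ) (c : ℤ → ℂ) (r : ℤ) (p : ℂ × ℂ) :
    HasFDerivAt (term m c r) (termFDeriv m c r p) p := by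
  have h0 : HasFDerivAt (fun q : ℂ × ℂ => expL m r q) (expL m r) p := (expL m r).hasFDerivAt
  have h1 : HasFDerivAt (fun q : ℂ × ℂ =>
      (ca m r : ℂ) * Complex.I * q.1 + (cb r : ℂ) * Complex.I * q.2) (expL m r) p := by
    refine h0.congr_of_eventuallyEq (Filter.Eventually.of_forall fun q => ?_)
    simp only [expL_apply]
  have h2 := h1.cexp.const_mul (c r)
  have h3 : HasFDerivAt (term m c r)
      (c r • Complex.exp ((ca m r : ℂ) * Complex.I * p.1 + (cb r : ℂ) * Complex.I * p.2) • expL m r)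
      p := by
    refine HasFDerivAt.congr_of_eventuallyEq h2 (Filter.Eventually.of_forall fun q => ?_)
    rw [term_eq]
  refine h3.congr_fderiv ?_
  rw [termFDeriv, term_eq, smul_smul]

lemma norm_term (m : ℤ) (c : ℤ → ℂ) (r : ℤ) (p : ℂ × ℂ) :
    ‖term m c r p‖ = ‖c r‖ * Real.exp (-(ca m r * p.1.im + cb r * p.2.im)) := by
  simp only [term_eq, norm_mul, Complex.norm_exp]
  congr 2
  simp [Complex.add_re, Complex.mul_re, Complex.mul_im]
  ring

lemma norm_expL_le (m r : ℤ) : ‖expL m r‖ ≤ |ca m r| + |cb r| := by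
  refine ContinuousLinearMap.opNorm_le_bound _ (by positivity) fun q => ?_
  rw [expL_apply]
  calc ‖(ca m r : ℂ) * Complex.I * q.1 + (cb r : ℂ) * Complex.I * q.2‖
      ≤ ‖(ca m r : ℂ) * Complex.I * q.1‖ + ‖(cb r : ℂ) * Complex.I * q.2‖ := norm_add_le _ _
    _ ≤ |ca m r| * ‖q‖ + |cb r| * ‖q‖ := by
        gcongr
        · rw [norm_mul, norm_mul, Complex.norm_real, Complex.norm_I, Real.norm_eq_abs, mul_one]
          exact mul_le_mul_of_nonneg_left (norm_fst_le q) (abs_nonneg _)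
        · rw [norm_mul, norm_mul, Complex.norm_real, Complex.norm_I, Real.norm_eq_abs, mul_one]
          exact mul_le_mul_of_nonneg_left (norm_snd_le q) (abs_nonneg _)
    _ = (|ca m r| + |cb r|) * ‖q‖ := by ring


lemma ca_nonneg {m : ℤ} (hm : 1 ≤ m) (r : ℤ) : 0 ≤ ca m r := by
  have : (0:ℝ) < m := by exact_mod_cast hm.trans_lt' zero_lt_one
  rw [ca]; positivity

lemma summable_bound (C S' : ℝ) {T' : ℝ} (hT' : 0 < T') (p : ℕ) :
    Summable (fun r : ℤ => C * |(r:ℝ)|^p * Real.exp (-π*(T'*r^2 - 2*S'*|(r:ℝ)|))) := by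
  refine ((summable_pow_mul_jacobiTheta₂_term_bound S' hT' p).mul_left C).congr fun n => ?_
  push_cast
  ring

lemma summable_bound' (C S' : ℝ) {T' : ℝ} (hT' : 0 < T') (p : ℕ) :
    Summable (fun r : ℤ => C * |(r:ℝ)|^p * (π*|(r:ℝ)|^2 + 2*π*|(r:ℝ)|)
      * Real.exp (-π*(T'*r^2 - 2*S'*|(r:ℝ)|))) := by
  have h1 := (summable_bound (C*π) S' hT' (p+2))
  have h2 := (summable_bound (C*(2*π)) S' hT' (p+1))
  refine (h1.add h2).congr fun n => ?_
  ring


lemma norm_term_le {m : ℤ} (hm : 1 ≤ m) {c : ℤ → ℂ} {C : ℝ} {p : ℕ}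
    (hc : ∀ r : ℤ, ‖c r‖ ≤ C * |(r:ℝ)|^p) {T S' : ℝ} {q : ℂ × ℂ}
    (hq1 : T ≤ q.1.im) (hq2 : |q.2.im| ≤ S') (r : ℤ) :
    ‖term m c r q‖ ≤ C * |(r:ℝ)|^p * Real.exp (-π*(T/(2*m)*r^2 - 2*S'*|(r:ℝ)|)) := by
  have hm0 : (0:ℝ) < m := by exact_mod_cast hm.trans_lt' zero_lt_one
  rw [norm_term]
  have h1 : ‖c r‖ ≤ C * |(r:ℝ)|^p := hc r
  have h2 : Real.exp (-(ca m r * q.1.im + cb r * q.2.im))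
      ≤ Real.exp (-π*(T/(2*m)*r^2 - 2*S'*|(r:ℝ)|)) := by
    apply Real.exp_le_exp.mpr
    have e1 : π * (T/(2*m)) * (r:ℝ)^2 = ca m r * T := by
      rw [ca]; field_simp; ring
    have e2 : ca m r * T ≤ ca m r * q.1.im :=
      mul_le_mul_of_nonneg_left hq1 (ca_nonneg hm r)
    have e3 : -(2*π*|(r:ℝ)| * S') ≤ cb r * q.2.im := by
      rw [cb]
      have h4 : |2*π*(r:ℝ)*q.2.im| ≤ 2*π*|(r:ℝ)| * S' := by
        rw [abs_mul, abs_mul, abs_mul, _root_.abs_of_nonneg (by norm_num : (0:ℝ) ≤ 2),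
          _root_.abs_of_nonneg Real.pi_pos.le]
        gcongr
      linarith [neg_abs_le (2*π*(r:ℝ)*q.2.im)]
    nlinarith [e1, e2, e3]
  exact mul_le_mul h1 h2 (Real.exp_nonneg _) ((norm_nonneg _).trans h1)

lemma norm_termFDeriv_le {m : ℤ} (hm : 1 ≤ m) {c : ℤ → ℂ} {C : ℝ} {p : ℕ}
    (hc : ∀ r : ℤ, ‖c r‖ ≤ C * |(r:ℝ)|^p) {T S' : ℝ} {q : ℂ × ℂ}
    (hq1 : T ≤ q.1.im) (hq2 : |q.2.im| ≤ S') (r : ℤ) :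
    ‖termFDeriv m c r q‖ ≤ C * |(r:ℝ)|^p * (π*|(r:ℝ)|^2 + 2*π*|(r:ℝ)|)
      * Real.exp (-π*(T/(2*m)*r^2 - 2*S'*|(r:ℝ)|)) := by
  have hm0 : (0:ℝ) < m := by exact_mod_cast hm.trans_lt' zero_lt_one
  simp only [termFDeriv]
  rw [norm_smul (term m c r q) (expL m r)]
  have h1 := norm_term_le hm hc hq1 hq2 r
  have h2 : ‖expL m r‖ ≤ π*|(r:ℝ)|^2 + 2*π*|(r:ℝ)| := by
    refine (norm_expL_le m r).trans ?_
    have hca : |ca m r| ≤ π*|(r:ℝ)|^2 := by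
      rw [_root_.abs_of_nonneg (ca_nonneg hm r), ca]
      rw [div_le_iff₀ (by positivity)]
      have h5 : (1:ℝ) ≤ m := by exact_mod_cast hm
      have h6 : (π * (r:ℝ)^2) * 2 ≤ (π * (r:ℝ)^2) * (4*(m:ℝ)) :=
        mul_le_mul_of_nonneg_left (by linarith) (by positivity)
      rw [_root_.sq_abs]
      linarith
    have hcb : |cb r| = 2*π*|(r:ℝ)| := by
      rw [cb, abs_mul, abs_mul, _root_.abs_of_nonneg (by norm_num : (0:ℝ) ≤ 2),
        _root_.abs_of_nonneg Real.pi_pos.le]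
    rw [hcb]; linarith
  calc ‖term m c r q‖ * ‖expL m r‖
      ≤ (C * |(r:ℝ)|^p * Real.exp (-π*(T/(2*m)*r^2 - 2*S'*|(r:ℝ)|)))
          * (π*|(r:ℝ)|^2 + 2*π*|(r:ℝ)|) :=
        mul_le_mul h1 h2 (norm_nonneg _) ((norm_nonneg _).trans h1)
    _ = _ := by ring

lemma summable_term {m : ℤ} (ℓ : ℤ) (hm : 1 ≤ m) {c : ℤ → ℂ} {C : ℝ} {p : ℕ}
    (hc : ∀ r : ℤ, ‖c r‖ ≤ C * |(r:ℝ)|^p) {w : ℂ} (z : ℂ) (hw : 0 < w.im) :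
    Summable (fun r : {r : ℤ // r ≡ ℓ [ZMOD 2*m]} => term m c r (w, z)) := by
  have hm0 : (0:ℝ) < m := by exact_mod_cast hm.trans_lt' zero_lt_one
  have hT' : 0 < w.im / (2*m) := by positivity
  apply Summable.of_norm_bounded ((summable_bound C |z.im| hT' p).subtype _)
  intro r
  exact norm_term_le hm hc le_rfl le_rfl r

lemma summable_termFDeriv {m : ℤ} (ℓ : ℤ) (hm : 1 ≤ m) {c : ℤ → ℂ} {C : ℝ} {p : ℕ}
    (hc : ∀ r : ℤ, ‖c r‖ ≤ C * |(r:ℝ)|^p) {w : ℂ} (z : ℂ) (hw : 0 < w.im) :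
    Summable (fun r : {r : ℤ // r ≡ ℓ [ZMOD 2*m]} => termFDeriv m c r (w, z)) := by
  have hm0 : (0:ℝ) < m := by exact_mod_cast hm.trans_lt' zero_lt_one
  have hT' : 0 < w.im / (2*m) := by positivity
  apply Summable.of_norm_bounded ((summable_bound' C |z.im| hT' p).subtype _)
  intro r
  exact norm_termFDeriv_le hm hc le_rfl le_rfl r

lemma hasFDerivAt_tsum_term {m : ℤ} (ℓ : ℤ) (hm : 1 ≤ m) (c : ℤ → ℂ) (C : ℝ) (p : ℕ)
    (hc : ∀ r : ℤ, ‖c r‖ ≤ C * |(r:ℝ)|^p) {w z : ℂ} (hw : 0 < w.im) :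
    HasFDerivAt (fun q : ℂ × ℂ => ∑' r : {r : ℤ // r ≡ ℓ [ZMOD 2*m]}, term m c r q)
      (∑' r : {r : ℤ // r ≡ ℓ [ZMOD 2*m]}, termFDeriv m c r (w, z)) (w, z) := by
  have hm0 : (0:ℝ) < m := by exact_mod_cast hm.trans_lt' zero_lt_one
  obtain ⟨T, hT, hTw⟩ := exists_between hw
  obtain ⟨S', hS'⟩ := exists_gt |z.im|
  have hS0 : 0 ≤ S' := (abs_nonneg _).trans hS'.le
  have hT' : 0 < T / (2*m) := by positivity
  set V : Set (ℂ × ℂ) := {u | T < u.im} ×ˢ {v | |v.im| < S'} with hV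
  have hVo : IsOpen V := ((continuous_im.isOpen_preimage _ isOpen_Ioi)).prod
    ((_root_.continuous_abs.comp continuous_im).isOpen_preimage _ isOpen_Iio)
  have hVmem : (w, z) ∈ V := ⟨hTw, hS'⟩
  have hVp : IsPreconnected V := by
    refine ((convex_halfSpace_im_gt T).isPreconnected).prod (Convex.isPreconnected ?_)
    simpa only [abs_lt, Set.setOf_and] using (convex_halfSpace_im_gt _).inter (convex_halfSpace_im_lt _)
  have hf0 : Summable (fun r : {r : ℤ // r ≡ ℓ [ZMOD 2*m]} => term m c r (w, z)) :=
    summable_term ℓ hm hc z hw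
  have husum : Summable (fun r : {r : ℤ // r ≡ ℓ [ZMOD 2*m]} =>
      C * |((r:ℤ):ℝ)|^p * (π*|((r:ℤ):ℝ)|^2 + 2*π*|((r:ℤ):ℝ)|)
        * Real.exp (-π*(T/(2*m)*((r:ℤ):ℝ)^2 - 2*S'*|((r:ℤ):ℝ)|))) :=
    (summable_bound' C S' hT' p).subtype _
  exact hasFDerivAt_tsum_of_isPreconnected husum hVo hVp
    (fun r q _ => hasFDerivAt_term m c r q)
    (fun r q hq => norm_termFDeriv_le hm hc hq.1.le hq.2.le r) hVmem hf0 hVmem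


/-- The theta-type series with coefficients `c`. -/
def Sf (m ℓ : ℤ) (c : ℤ → ℂ) (w z : ℂ) : ℂ :=
  ∑' r : {r : ℤ // r ≡ ℓ [ZMOD 2*m]}, term m c r (w, z)

lemma termFDeriv_apply (m : ℤ) (c : ℤ → ℂ) (r : ℤ) (p d : ℂ × ℂ) :
    termFDeriv m c r p d = term m c r p * expL m r d := by
  simp [termFDeriv, smul_eq_mul]

lemma hasSum_termFDeriv_eval {m : ℤ} (ℓ : ℤ) (hm : 1 ≤ m) {c : ℤ → ℂ} {C : ℝ} {p : ℕ}
    (hc : ∀ r : ℤ, ‖c r‖ ≤ C * |(r:ℝ)|^p) {w : ℂ} (z : ℂ) (hw : 0 < w.im) (d : ℂ × ℂ) :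
    HasSum (fun r : {r : ℤ // r ≡ ℓ [ZMOD 2*m]} => termFDeriv m c r (w, z) d)
      ((∑' r : {r : ℤ // r ≡ ℓ [ZMOD 2*m]}, termFDeriv m c r (w, z)) d) := by
  have h := (ContinuousLinearMap.apply ℂ ℂ d).hasSum (summable_termFDeriv ℓ hm hc z hw).hasSum
  simpa only [ContinuousLinearMap.apply_apply] using h

lemma hasDerivAt_Sf_fst {m : ℤ} (ℓ : ℤ) (hm : 1 ≤ m) (c : ℤ → ℂ) (C : ℝ) (p : ℕ)
    (hc : ∀ r : ℤ, ‖c r‖ ≤ C * |(r:ℝ)|^p) {w : ℂ} (z : ℂ) (hw : 0 < w.im) :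
    HasDerivAt (fun w' => Sf m ℓ c w' z)
      (Sf m ℓ (fun r => (ca m r : ℂ) * Complex.I * c r) w z) w := by
  have joint := hasFDerivAt_tsum_term ℓ hm c C p hc (z := z) hw
  have hd : HasDerivAt (fun w' => Sf m ℓ c w' z)
      ((∑' r : {r : ℤ // r ≡ ℓ [ZMOD 2*m]}, termFDeriv m c r (w, z)) (1, 0)) w := by
    have h2 := (joint.comp w (hasFDerivAt_prodMk_left w z)).hasDerivAt
    simpa only [Function.comp_def, ContinuousLinearMap.coe_comp', Function.comp_apply, ContinuousLinearMap.inl_apply, Sf] using h2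
  have he := (hasSum_termFDeriv_eval ℓ hm hc z hw (1, 0)).tsum_eq
  rw [← he] at hd
  refine hd.congr_deriv ?_
  rw [Sf]
  refine tsum_congr fun r => ?_
  rw [termFDeriv_apply, expL_apply, term, term]
  simp only [Prod.fst, Prod.snd]
  ring

lemma hasDerivAt_Sf_snd {m : ℤ} (ℓ : ℤ) (hm : 1 ≤ m) (c : ℤ → ℂ) (C : ℝ) (p : ℕ)
    (hc : ∀ r : ℤ, ‖c r‖ ≤ C * |(r:ℝ)|^p) {w : ℂ} (z : ℂ) (hw : 0 < w.im) :
    HasDerivAt (fun z' => Sf m ℓ c w z')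
      (Sf m ℓ (fun r => (cb r : ℂ) * Complex.I * c r) w z) z := by
  have joint := hasFDerivAt_tsum_term ℓ hm c C p hc (z := z) hw
  have hd : HasDerivAt (fun z' => Sf m ℓ c w z')
      ((∑' r : {r : ℤ // r ≡ ℓ [ZMOD 2*m]}, termFDeriv m c r (w, z)) (0, 1)) z := by
    have h2 := (joint.comp z (hasFDerivAt_prodMk_right w z)).hasDerivAt
    simpa only [Function.comp_def, ContinuousLinearMap.coe_comp', Function.comp_apply, ContinuousLinearMap.inr_apply, Sf] using h2
  have he := (hasSum_termFDeriv_eval ℓ hm hc z hw (0, 1)).tsum_eq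
  rw [← he] at hd
  refine hd.congr_deriv ?_
  rw [Sf]
  refine tsum_congr fun r => ?_
  rw [termFDeriv_apply, expL_apply, term, term]
  simp only [Prod.fst, Prod.snd]
  ring


/-! ### Wirtinger calculus -/

lemma partialDeriv_of_hasDerivAt {f : ℂ → ℂ} {a τ : ℂ} (hf : HasDerivAt f a τ) (d : ℂ) :
    partialDeriv d f τ = d * a := by
  rw [partialDeriv, (hf.hasFDerivAt.restrictScalars ℝ).fderiv]
  simp [smul_eq_mul]

lemma dTau_eq_of_hasDerivAt {f : ℂ → ℂ} {a τ : ℂ} (hf : HasDerivAt f a τ) :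
    dTau f τ = a := by
  rw [dTau]
  rw [partialDeriv_of_hasDerivAt hf 1, partialDeriv_of_hasDerivAt hf Complex.I]
  linear_combination (-(a/2)) * Complex.I_sq

lemma dTauBar_eq_zero_of_hasDerivAt {f : ℂ → ℂ} {a τ : ℂ} (hf : HasDerivAt f a τ) :
    dTauBar f τ = 0 := by
  rw [dTauBar]
  rw [partialDeriv_of_hasDerivAt hf 1, partialDeriv_of_hasDerivAt hf Complex.I]
  linear_combination (a/2) * Complex.I_sq

lemma partialDeriv_mul (d : ℂ) {f g : ℂ → ℂ} {τ : ℂ}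
    (hf : DifferentiableAt ℝ f τ) (hg : DifferentiableAt ℝ g τ) :
    partialDeriv d (fun w => f w * g w) τ
      = f τ * partialDeriv d g τ + g τ * partialDeriv d f τ := by
  rw [partialDeriv, fderiv_fun_mul hf hg]
  simp [partialDeriv, smul_eq_mul]

lemma dTau_mul {f g : ℂ → ℂ} {τ : ℂ}
    (hf : DifferentiableAt ℝ f τ) (hg : DifferentiableAt ℝ g τ) :
    dTau (fun w => f w * g w) τ = f τ * dTau g τ + g τ * dTau f τ := by
  rw [dTau, dTau, dTau, partialDeriv_mul _ hf hg, partialDeriv_mul _ hf hg]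
  ring

lemma dTauBar_mul {f g : ℂ → ℂ} {τ : ℂ}
    (hf : DifferentiableAt ℝ f τ) (hg : DifferentiableAt ℝ g τ) :
    dTauBar (fun w => f w * g w) τ = f τ * dTauBar g τ + g τ * dTauBar f τ := by
  rw [dTauBar, dTauBar, dTauBar, partialDeriv_mul _ hf hg, partialDeriv_mul _ hf hg]
  ring

lemma partialDeriv_congr {f g : ℂ → ℂ} {τ : ℂ} (hfg : f =ᶠ[nhds τ] g) (d : ℂ) :
    partialDeriv d f τ = partialDeriv d g τ := by
  rw [partialDeriv, partialDeriv, hfg.fderiv_eq]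

lemma dTauBar_congr {f g : ℂ → ℂ} {τ : ℂ} (hfg : f =ᶠ[nhds τ] g) :
    dTauBar f τ = dTauBar g τ := by
  rw [dTauBar, dTauBar, partialDeriv_congr hfg, partialDeriv_congr hfg]


/-! ### Second derivatives of `h` -/

section SecondDeriv

variable {h : ℂ → ℂ} {τ : ℂ}

lemma upperHalf_isOpen : IsOpen {τ : ℂ | 0 < τ.im} := isOpen_lt continuous_const continuous_im

lemma diffAt_of_contDiffOn (hh : ContDiffOn ℝ 2 h {τ : ℂ | 0 < τ.im}) {w : ℂ} (hw : 0 < w.im) :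
    DifferentiableAt ℝ h w :=
  (hh.differentiableOn (by norm_num)).differentiableAt (upperHalf_isOpen.mem_nhds hw)

lemma diffAt_fderiv (hh : ContDiffOn ℝ 2 h {τ : ℂ | 0 < τ.im}) (hτ : 0 < τ.im) :
    DifferentiableAt ℝ (fderiv ℝ h) τ :=
  (((hh.fderiv_of_isOpen (m := 1) upperHalf_isOpen (by norm_num)).differentiableOn
    (by norm_num)).differentiableAt (upperHalf_isOpen.mem_nhds hτ))

lemma hasFDerivAt_partialDeriv (hh : ContDiffOn ℝ 2 h {τ : ℂ | 0 < τ.im}) (hτ : 0 < τ.im)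
    (d : ℂ) :
    HasFDerivAt (partialDeriv d h)
      ((ContinuousLinearMap.apply ℝ ℂ d).comp (fderiv ℝ (fderiv ℝ h) τ)) τ :=
  (ContinuousLinearMap.apply ℝ ℂ d).hasFDerivAt.comp τ (diffAt_fderiv hh hτ).hasFDerivAt

lemma partialDeriv_partialDeriv (hh : ContDiffOn ℝ 2 h {τ : ℂ | 0 < τ.im}) (hτ : 0 < τ.im)
    (d d' : ℂ) :
    partialDeriv d' (partialDeriv d h) τ = fderiv ℝ (fderiv ℝ h) τ d' d := by
  rw [partialDeriv, (hasFDerivAt_partialDeriv hh hτ d).fderiv]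
  simp

lemma second_symm (hh : ContDiffOn ℝ 2 h {τ : ℂ | 0 < τ.im}) (hτ : 0 < τ.im) :
    fderiv ℝ (fderiv ℝ h) τ 1 Complex.I = fderiv ℝ (fderiv ℝ h) τ Complex.I 1 := by
  have hev : ∀ᶠ y in nhds τ, HasFDerivAt h (fderiv ℝ h y) y := by
    filter_upwards [upperHalf_isOpen.mem_nhds hτ] with w hw
    exact (diffAt_of_contDiffOn hh hw).hasFDerivAt
  exact second_derivative_symmetric_of_eventually hev (diffAt_fderiv hh hτ).hasFDerivAt 1 Complex.I

lemma differentiableAt_partialDeriv (hh : ContDiffOn ℝ 2 h {τ : ℂ | 0 < τ.im}) (hτ : 0 < τ.im)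
    (d : ℂ) : DifferentiableAt ℝ (partialDeriv d h) τ :=
  (hasFDerivAt_partialDeriv hh hτ d).differentiableAt

lemma differentiableAt_dTau (hh : ContDiffOn ℝ 2 h {τ : ℂ | 0 < τ.im}) (hτ : 0 < τ.im) :
    DifferentiableAt ℝ (dTau h) τ := by
  have h1 := differentiableAt_partialDeriv hh hτ 1
  have h2 := differentiableAt_partialDeriv hh hτ Complex.I
  exact ((h1.sub (h2.const_mul Complex.I)).const_mul (1/2 : ℂ))

lemma partialDeriv_dTau (hh : ContDiffOn ℝ 2 h {τ : ℂ | 0 < τ.im}) (hτ : 0 < τ.im) (d : ℂ) :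
    partialDeriv d (dTau h) τ = 1/2 * (partialDeriv d (partialDeriv 1 h) τ
      - Complex.I * partialDeriv d (partialDeriv Complex.I h) τ) := by
  have h1 := differentiableAt_partialDeriv hh hτ 1
  have h2 := differentiableAt_partialDeriv hh hτ Complex.I
  rw [partialDeriv]
  rw [show dTau h = fun w => (1/2 : ℂ) * (partialDeriv 1 h w
    - Complex.I * partialDeriv Complex.I h w) from rfl]
  rw [fderiv_const_mul (a := fun w => partialDeriv 1 h w - Complex.I * partialDeriv Complex.I h w) (h1.sub (h2.const_mul Complex.I)) ((1:ℂ)/2),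
    fderiv_fun_sub h1 (h2.const_mul Complex.I), fderiv_const_mul h2 Complex.I]
  simp [partialDeriv, smul_eq_mul]

lemma partialDeriv_dTauBar (hh : ContDiffOn ℝ 2 h {τ : ℂ | 0 < τ.im}) (hτ : 0 < τ.im) (d : ℂ) :
    partialDeriv d (dTauBar h) τ = 1/2 * (partialDeriv d (partialDeriv 1 h) τ
      + Complex.I * partialDeriv d (partialDeriv Complex.I h) τ) := by
  have h1 := differentiableAt_partialDeriv hh hτ 1
  have h2 := differentiableAt_partialDeriv hh hτ Complex.I
  rw [partialDeriv]
  rw [show dTauBar h = fun w => (1/2 : ℂ) * (partialDeriv 1 h w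
    + Complex.I * partialDeriv Complex.I h w) from rfl]
  rw [fderiv_const_mul (a := fun w => partialDeriv 1 h w + Complex.I * partialDeriv Complex.I h w) (h1.add (h2.const_mul Complex.I)) ((1:ℂ)/2),
    fderiv_fun_add h1 (h2.const_mul Complex.I), fderiv_const_mul h2 Complex.I]
  simp [partialDeriv, smul_eq_mul]
  ring

lemma dTau_dTauBar_comm (hh : ContDiffOn ℝ 2 h {τ : ℂ | 0 < τ.im}) (hτ : 0 < τ.im) :
    dTau (dTauBar h) τ = dTauBar (dTau h) τ := by
  have e1 : dTau (dTauBar h) τ = 1/2 * (partialDeriv 1 (dTauBar h) τ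
      - Complex.I * partialDeriv Complex.I (dTauBar h) τ) := rfl
  have e2 : dTauBar (dTau h) τ = 1/2 * (partialDeriv 1 (dTau h) τ
      + Complex.I * partialDeriv Complex.I (dTau h) τ) := rfl
  rw [e1, e2, partialDeriv_dTauBar hh hτ 1, partialDeriv_dTauBar hh hτ Complex.I,
    partialDeriv_dTau hh hτ 1, partialDeriv_dTau hh hτ Complex.I,
    partialDeriv_partialDeriv hh hτ 1 1, partialDeriv_partialDeriv hh hτ 1 Complex.I,
    partialDeriv_partialDeriv hh hτ Complex.I 1,
    partialDeriv_partialDeriv hh hτ Complex.I Complex.I]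
  linear_combination (Complex.I/2) * (second_symm hh hτ)

end SecondDeriv


/-! ### The heat operator on `h · θ` -/

lemma jacobiThetaML_eq_Sf (m ℓ : ℤ) (w z : ℂ) :
    jacobiThetaML m ℓ w z = Sf m ℓ (fun _ => (1:ℂ)) w z := by
  rw [jacobiThetaML, Sf]
  exact tsum_congr fun r => by rw [term, one_mul]

lemma hc0 : ∀ r : ℤ, ‖(fun _ : ℤ => (1:ℂ)) r‖ ≤ 1 * |(r:ℝ)|^0 := by
  intro r; simp

lemma hcz : ∀ r : ℤ, ‖(cb r : ℂ) * Complex.I * 1‖ ≤ 2*π * |(r:ℝ)|^1 := by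
  intro r
  rw [mul_one, norm_mul, Complex.norm_real, Complex.norm_I, mul_one, Real.norm_eq_abs, cb,
    pow_one, abs_mul, abs_mul, _root_.abs_of_nonneg (by norm_num : (0:ℝ) ≤ 2),
    _root_.abs_of_nonneg Real.pi_pos.le]

lemma heatOp_eq {m : ℤ} (ℓ : ℤ) (hm : 1 ≤ m) {h : ℂ → ℂ}
    (hh : ContDiffOn ℝ 2 h {τ : ℂ | 0 < τ.im}) {w : ℂ} (hw : 0 < w.im) (z : ℂ) :
    heatOp m (fun w' z' => h w' * jacobiThetaML m ℓ w' z') w z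
      = 8 * Real.pi * Complex.I * (m:ℂ) * dTau h w * jacobiThetaML m ℓ w z := by
  have hm0 : (m:ℂ) ≠ 0 := by
    exact_mod_cast (by omega : m ≠ 0)
  have hfst : HasDerivAt (fun w' => jacobiThetaML m ℓ w' z)
      (Sf m ℓ (fun r => (ca m r : ℂ) * Complex.I * 1) w z) w := by
    have h1 := hasDerivAt_Sf_fst ℓ hm (fun _ => (1:ℂ)) 1 0 hc0 z hw
    exact h1.congr_of_eventuallyEq
      (Filter.Eventually.of_forall fun w' => jacobiThetaML_eq_Sf m ℓ w' z)
  have hdTauθ : dTau (fun w' => jacobiThetaML m ℓ w' z) w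
      = Sf m ℓ (fun r => (ca m r : ℂ) * Complex.I * 1) w z := dTau_eq_of_hasDerivAt hfst
  have hdiffθ : DifferentiableAt ℝ (fun w' => jacobiThetaML m ℓ w' z) w :=
    hfst.differentiableAt.restrictScalars ℝ
  have hdiffh := diffAt_of_contDiffOn hh hw
  have hmul : dTau (fun w' => h w' * jacobiThetaML m ℓ w' z) w
      = h w * Sf m ℓ (fun r => (ca m r : ℂ) * Complex.I * 1) w z
        + jacobiThetaML m ℓ w z * dTau h w := by
    rw [dTau_mul hdiffh hdiffθ, hdTauθ]
  have hsnd : ∀ z' : ℂ, HasDerivAt (fun z'' => jacobiThetaML m ℓ w z'')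
      (Sf m ℓ (fun r => (cb r : ℂ) * Complex.I * 1) w z') z' := by
    intro z'
    have h1 := hasDerivAt_Sf_snd ℓ hm (fun _ => (1:ℂ)) 1 0 hc0 (w := w) z' hw
    exact h1.congr_of_eventuallyEq
      (Filter.Eventually.of_forall fun z'' => jacobiThetaML_eq_Sf m ℓ w z'')
  have hsnd2 : HasDerivAt (fun z' => Sf m ℓ (fun r => (cb r : ℂ) * Complex.I * 1) w z')
      (Sf m ℓ (fun r => (cb r : ℂ) * Complex.I * ((cb r : ℂ) * Complex.I * 1)) w z) z :=
    hasDerivAt_Sf_snd ℓ hm (fun r => (cb r : ℂ) * Complex.I * 1) (2*π) 1 hcz z hw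
  have hiter : iteratedDeriv 2 (fun z' => h w * jacobiThetaML m ℓ w z') z
      = h w * Sf m ℓ (fun r => (cb r : ℂ) * Complex.I * ((cb r : ℂ) * Complex.I * 1)) w z := by
    rw [iteratedDeriv_succ, iteratedDeriv_one]
    have e : deriv (fun z' => h w * jacobiThetaML m ℓ w z')
        = fun z' => h w * Sf m ℓ (fun r => (cb r : ℂ) * Complex.I * 1) w z' := by
      funext z'
      exact ((hsnd z').const_mul (h w)).deriv
    rw [e]
    exact (hsnd2.const_mul (h w)).deriv
  have hid : 8 * (Real.pi:ℂ) * Complex.I * (m:ℂ)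
        * Sf m ℓ (fun r => (ca m r : ℂ) * Complex.I * 1) w z
      = Sf m ℓ (fun r => (cb r : ℂ) * Complex.I * ((cb r : ℂ) * Complex.I * 1)) w z := by
    rw [Sf, Sf, ← tsum_mul_left]
    refine tsum_congr fun r => ?_
    rw [term, term]
    simp only [ca, cb]
    push_cast
    field_simp
    ring
  simp only [heatOp]
  rw [hmul, hiter]
  linear_combination (h w) * hid


lemma partialDeriv_const_mul (d : ℂ) (c : ℂ) {f : ℂ → ℂ} {τ : ℂ}
    (hf : DifferentiableAt ℝ f τ) :
    partialDeriv d (fun w => c * f w) τ = c * partialDeriv d f τ := by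
  rw [partialDeriv, fderiv_const_mul hf c]
  simp [partialDeriv, smul_eq_mul]

lemma dTauBar_const_mul (c : ℂ) {f : ℂ → ℂ} {τ : ℂ} (hf : DifferentiableAt ℝ f τ) :
    dTauBar (fun w => c * f w) τ = c * dTauBar f τ := by
  rw [dTauBar, dTauBar, partialDeriv_const_mul _ _ hf, partialDeriv_const_mul _ _ hf]
  ring

lemma skewCasimir_eq {k m : ℤ} (ℓ : ℤ) (hm : 1 ≤ m) {h : ℂ → ℂ}
    (hh : ContDiffOn ℝ 2 h {τ : ℂ | 0 < τ.im}) {τ : ℂ} (hτ : 0 < τ.im) (z : ℂ) :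
    skewCasimir k m (fun w z => h w * jacobiThetaML m ℓ w z) τ z
      = 2 * jacobiThetaML m ℓ τ z *
        (2 * Complex.I * (τ.im : ℂ) * ((k : ℂ) - 1 / 2) * dTau h τ
          + 4 * (τ.im : ℂ)^2 * dTau (dTauBar h) τ) := by
  have hm0 : (m:ℂ) ≠ 0 := by exact_mod_cast (by omega : m ≠ 0)
  have hmR : (0:ℝ) < m := by exact_mod_cast hm.trans_lt' zero_lt_one
  set v : ℝ := τ.im with hv
  set α : ℝ := (k:ℝ) - 1/2 with hα
  set p1 : ℂ → ℂ := fun w => ((w.im ^ ((k:ℝ) - 1/2) : ℝ) : ℂ) with hp1def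
  -- step A: replace heatOp by its value near τ
  have hev : (fun w => p1 w * heatOp m (fun w' z' => h w' * jacobiThetaML m ℓ w' z') w z)
      =ᶠ[nhds τ] (fun w => p1 w *
        (8 * Real.pi * Complex.I * (m:ℂ) * dTau h w * jacobiThetaML m ℓ w z)) := by
    filter_upwards [upperHalf_isOpen.mem_nhds hτ] with w hw
    rw [heatOp_eq ℓ hm hh hw z]
  -- derivative facts for p1
  have hd1 : HasDerivAt (fun x : ℝ => x ^ α) (α * v ^ (α - 1)) v :=
    Real.hasDerivAt_rpow_const (Or.inl hτ.ne')
  have hd2 : HasFDerivAt (fun w : ℂ => w.im) Complex.imCLM τ := Complex.imCLM.hasFDerivAt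
  have hd3 : HasFDerivAt p1
      (Complex.ofRealCLM.comp ((α * v ^ (α - 1)) • Complex.imCLM)) τ :=
    Complex.ofRealCLM.hasFDerivAt.comp τ (hd1.comp_hasFDerivAt τ hd2 : HasFDerivAt ((fun x : ℝ => x ^ α) ∘ fun w : ℂ => w.im) _ τ)
  have hdiffp1 : DifferentiableAt ℝ p1 τ := hd3.differentiableAt
  have hpd1 : partialDeriv 1 p1 τ = 0 := by
    rw [partialDeriv, hd3.fderiv]; simp
  have hpdI : partialDeriv Complex.I p1 τ = ((α * v ^ (α - 1) : ℝ) : ℂ) := by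
    rw [partialDeriv, hd3.fderiv]; simp
  have hdBp1 : dTauBar p1 τ = Complex.I * ((α * v ^ (α - 1) : ℝ) : ℂ) / 2 := by
    rw [dTauBar, hpd1, hpdI]; ring
  -- derivative facts for θ and dTau h
  have hfst : HasDerivAt (fun w' => jacobiThetaML m ℓ w' z)
      (Sf m ℓ (fun r => (ca m r : ℂ) * Complex.I * 1) τ z) τ := by
    have h1 := hasDerivAt_Sf_fst ℓ hm (fun _ => (1:ℂ)) 1 0 hc0 z hτ
    exact h1.congr_of_eventuallyEq
      (Filter.Eventually.of_forall fun w' => jacobiThetaML_eq_Sf m ℓ w' z)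
  have hdiffθ : DifferentiableAt ℝ (fun w' => jacobiThetaML m ℓ w' z) τ :=
    hfst.differentiableAt.restrictScalars ℝ
  have hdBθ : dTauBar (fun w' => jacobiThetaML m ℓ w' z) τ = 0 :=
    dTauBar_eq_zero_of_hasDerivAt hfst
  have hdiffdh : DifferentiableAt ℝ (dTau h) τ := differentiableAt_dTau hh hτ
  have hdiffA : DifferentiableAt ℝ (fun w => 8 * (Real.pi:ℂ) * Complex.I * (m:ℂ) * dTau h w) τ :=
    hdiffdh.const_mul _
  have hdBA : dTauBar (fun w => 8 * (Real.pi:ℂ) * Complex.I * (m:ℂ) * dTau h w) τ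
      = 8 * (Real.pi:ℂ) * Complex.I * (m:ℂ) * dTauBar (dTau h) τ :=
    dTauBar_const_mul _ hdiffdh
  -- compute the inner dTauBar
  have hmain : dTauBar (fun w => p1 w *
        (8 * Real.pi * Complex.I * (m:ℂ) * dTau h w * jacobiThetaML m ℓ w z)) τ
      = p1 τ * (8 * Real.pi * Complex.I * (m:ℂ) * dTau h τ * dTauBar (fun w' => jacobiThetaML m ℓ w' z) τ
          + jacobiThetaML m ℓ τ z * (8 * (Real.pi:ℂ) * Complex.I * (m:ℂ) * dTauBar (dTau h) τ))
        + (8 * Real.pi * Complex.I * (m:ℂ) * dTau h τ * jacobiThetaML m ℓ τ z) * dTauBar p1 τ := by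
    rw [dTauBar_mul (g := fun w => 8 * Real.pi * Complex.I * (m:ℂ) * dTau h w * jacobiThetaML m ℓ w z) hdiffp1 (hdiffA.mul hdiffθ)]
    rw [dTauBar_mul hdiffA hdiffθ, hdBA]
  rw [skewCasimir, dTauBar_congr hev, hmain, hdBθ, hdBp1, dTau_dTauBar_comm hh hτ]
  -- now pure algebra with rpow identities
  have f1 : (v ^ ((1:ℝ)/2 - (k:ℝ)) : ℝ) * (v ^ ((k:ℝ) - 1/2) : ℝ) = 1 := by
    rw [← Real.rpow_add hτ]
    norm_num
  have f2 : (v ^ ((1:ℝ)/2 - (k:ℝ)) : ℝ) * (v ^ (α - 1) : ℝ) * v = 1 := by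
    rw [← Real.rpow_add hτ, hα]
    have : (1:ℝ)/2 - (k:ℝ) + ((k:ℝ) - 1/2 - 1) = -1 := by ring
    rw [this, Real.rpow_neg_one]
    field_simp
  have f1' : ((v ^ ((1:ℝ)/2 - (k:ℝ)) : ℝ) : ℂ) * ((v ^ ((k:ℝ) - 1/2) : ℝ) : ℂ) = 1 := by
    exact_mod_cast congrArg Complex.ofReal f1
  have f2' : ((v ^ ((1:ℝ)/2 - (k:ℝ)) : ℝ) : ℂ) * ((v ^ (α - 1) : ℝ) : ℂ) * (v:ℂ) = 1 := by
    exact_mod_cast congrArg Complex.ofReal f2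
  have hπ : (Real.pi : ℂ) ≠ 0 := by exact_mod_cast Real.pi_ne_zero
  have hvC : (v:ℂ) ≠ 0 := by exact_mod_cast hτ.ne'
  rw [hp1def]
  set A : ℂ := ((v ^ ((1:ℝ)/2 - (k:ℝ)) : ℝ) : ℂ)
  set B : ℂ := ((v ^ ((k:ℝ) - 1/2) : ℝ) : ℂ)
  set Cc : ℂ := ((v ^ (α - 1) : ℝ) : ℂ)
  set θ : ℂ := jacobiThetaML m ℓ τ z
  set dh : ℂ := dTau h τ
  set D : ℂ := dTau (dTauBar h) τ
  set αc : ℂ := ((α:ℝ) : ℂ) with hαc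
  have hαc' : αc = (k:ℂ) - 1/2 := by rw [hαc, hα]; push_cast; ring
  have hA0 : A ≠ 0 := by
    simp only [A, ne_eq, Complex.ofReal_eq_zero]
    exact (Real.rpow_pos_of_pos hτ _).ne'
  have hB : B = A⁻¹ := eq_inv_of_mul_eq_one_right (by linear_combination f1')
  have hCc : Cc = ((v:ℂ) * A)⁻¹ := eq_inv_of_mul_eq_one_right (by linear_combination f2')
  simp only []
  rw [show ((α * v ^ (α - 1) : ℝ) : ℂ) = αc * Cc from by push_cast; ring]
  rw [show ((τ.im ^ ((k:ℝ) - 1/2) : ℝ) : ℂ) = B from rfl]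
  rw [← hαc', hB, hCc]
  have hI := Complex.I_sq
  have hτC : ((τ.im : ℝ) : ℂ) ≠ 0 := hvC
  field_simp [hπ, hm0, hA0, hτC]
  ring_nf
  rw [show Complex.I^3 = -Complex.I from by rw [pow_succ, hI]; ring, hI]
  field_simp [hπ, hm0, hA0, hτC]
  ring


/-! ### Nonvanishing of the theta series -/

lemma theta_exists_ne_zero {m ℓ : ℤ} (hm : 1 ≤ m) {τ : ℂ} (hτ : 0 < τ.im) :
    ∃ z : ℂ, jacobiThetaML m ℓ τ z ≠ 0 := by
  have hmR : (0:ℝ) < m := by exact_mod_cast hm.trans_lt' zero_lt_one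
  by_contra hcon
  push_neg at hcon
  set f : {r : ℤ // r ≡ ℓ [ZMOD 2*m]} → ℝ → ℂ := fun r x =>
    Complex.exp (2 * Real.pi * Complex.I *
        ((((r:ℤ):ℤ) : ℂ)^2 * τ / (4*m) + (((r:ℤ):ℤ) : ℂ) * (x:ℂ)))
      * Complex.exp (-(2 * Real.pi * Complex.I * (ℓ:ℂ) * (x:ℂ))) with hfdef
  -- each f r is the term times a unimodular factor
  have hterm : ∀ (r : {r : ℤ // r ≡ ℓ [ZMOD 2*m]}) (x : ℝ),
      f r x = term m (fun _ => (1:ℂ)) (r:ℤ) (τ, (x:ℂ))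
        * Complex.exp (-(2 * Real.pi * Complex.I * (ℓ:ℂ) * (x:ℂ))) := by
    intro r x
    rw [hfdef]
    simp only [term, one_mul]
  have hnorm : ∀ (r : {r : ℤ // r ≡ ℓ [ZMOD 2*m]}) (x : ℝ),
      ‖f r x‖ = Real.exp (-(ca m (r:ℤ) * τ.im)) := by
    intro r x
    rw [hterm, norm_mul, norm_term]
    have h1 : ‖Complex.exp (-(2 * Real.pi * Complex.I * (ℓ:ℂ) * (x:ℂ)))‖ = 1 := by
      rw [Complex.norm_exp]
      have : (-(2 * (Real.pi:ℂ) * Complex.I * (ℓ:ℂ) * (x:ℂ))).re = 0 := by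
        simp [Complex.mul_re, Complex.mul_im]
      rw [this, Real.exp_zero]
    rw [h1, norm_one, one_mul, mul_one]
    congr 1
    simp [Complex.ofReal_im]
  -- integrability
  have hF_int : ∀ r : {r : ℤ // r ≡ ℓ [ZMOD 2*m]},
      MeasureTheory.Integrable (f r) (MeasureTheory.volume.restrict (Set.Ioc (0:ℝ) 1)) := by
    intro r
    apply Continuous.integrableOn_Ioc
    rw [hfdef]
    fun_prop
  -- summability of integrals of norms
  have hT' : 0 < τ.im / (2*m) := by positivity
  have hK : Summable (fun r : {r : ℤ // r ≡ ℓ [ZMOD 2*m]} =>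
      Real.exp (-(ca m (r:ℤ) * τ.im))) := by
    refine ((summable_bound 1 0 hT' 0).subtype _).congr fun r => ?_
    simp only [Function.comp_apply, pow_zero, mul_one, one_mul]
    rw [ca]
    congr 1
    field_simp
    ring
  have hF_sum : Summable (fun r : {r : ℤ // r ≡ ℓ [ZMOD 2*m]} =>
      ∫ x, ‖f r x‖ ∂(MeasureTheory.volume.restrict (Set.Ioc (0:ℝ) 1))) := by
    refine hK.congr fun r => ?_
    have : (fun x : ℝ => ‖f r x‖) = fun _ : ℝ => Real.exp (-(ca m (r:ℤ) * τ.im)) := by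
      funext x; exact hnorm r x
    rw [this, MeasureTheory.integral_const]
    simp [Real.volume_Ioc]
  -- interchange
  have hinter := MeasureTheory.integral_tsum_of_summable_integral_norm hF_int hF_sum
  -- the right side vanishes
  have hzero : ∀ x : ℝ, (∑' r : {r : ℤ // r ≡ ℓ [ZMOD 2*m]}, f r x) = 0 := by
    intro x
    rw [hfdef]
    rw [tsum_mul_right]
    have := hcon (x:ℂ)
    rw [jacobiThetaML] at this
    rw [this, zero_mul]
  have hR0 : (∫ x, (∑' r : {r : ℤ // r ≡ ℓ [ZMOD 2*m]}, f r x)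
      ∂(MeasureTheory.volume.restrict (Set.Ioc (0:ℝ) 1))) = 0 := by
    simp only [hzero]
    exact MeasureTheory.integral_zero _ _
  -- compute each integral
  have hint : ∀ r : {r : ℤ // r ≡ ℓ [ZMOD 2*m]},
      (∫ x, f r x ∂(MeasureTheory.volume.restrict (Set.Ioc (0:ℝ) 1)))
        = if ((r:ℤ) = ℓ) then Complex.exp (2 * Real.pi * Complex.I * ((ℓ:ℂ)^2 * τ / (4*m)))
          else 0 := by
    intro r
    have hsplit : ∀ x : ℝ, f r x
        = Complex.exp (2 * Real.pi * Complex.I * ((((r:ℤ)):ℂ)^2 * τ / (4*m)))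
          * Complex.exp ((2 * Real.pi * Complex.I * (((r:ℤ):ℂ) - (ℓ:ℂ))) * (x:ℂ)) := by
      intro x
      rw [hfdef]
      simp only []
      rw [← Complex.exp_add, ← Complex.exp_add]
      congr 1
      ring
    have : (∫ x, f r x ∂(MeasureTheory.volume.restrict (Set.Ioc (0:ℝ) 1)))
        = Complex.exp (2 * Real.pi * Complex.I * ((((r:ℤ)):ℂ)^2 * τ / (4*m)))
          * ∫ x, Complex.exp ((2 * Real.pi * Complex.I * (((r:ℤ):ℂ) - (ℓ:ℂ))) * (x:ℂ))
              ∂(MeasureTheory.volume.restrict (Set.Ioc (0:ℝ) 1)) := by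
      rw [← MeasureTheory.integral_const_mul]
      exact MeasureTheory.integral_congr_ae (Filter.Eventually.of_forall fun x => hsplit x)
    rw [this]
    by_cases hr : (r:ℤ) = ℓ
    · rw [if_pos hr, hr]
      have hc0' : ((ℓ:ℂ) - (ℓ:ℂ)) = 0 := by ring
      have : (fun x : ℝ => Complex.exp ((2 * Real.pi * Complex.I * (((ℓ:ℤ):ℂ) - (ℓ:ℂ))) * (x:ℂ)))
          = fun _ : ℝ => (1:ℂ) := by
        funext x
        rw [show (((ℓ:ℤ):ℂ) - (ℓ:ℂ)) = 0 from by push_cast; ring]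
        simp
      rw [this, MeasureTheory.integral_const]
      simp [Real.volume_Ioc]
    · rw [if_neg hr]
      have hb : (2 * (Real.pi:ℂ) * Complex.I * (((r:ℤ):ℂ) - (ℓ:ℂ))) ≠ 0 := by
        apply mul_ne_zero
        apply mul_ne_zero
        apply mul_ne_zero
        · norm_num
        · exact_mod_cast Real.pi_ne_zero
        · exact Complex.I_ne_zero
        · rw [sub_ne_zero]
          exact_mod_cast hr
      have hi1 : (∫ x, Complex.exp ((2 * Real.pi * Complex.I * (((r:ℤ):ℂ) - (ℓ:ℂ))) * (x:ℂ))
            ∂(MeasureTheory.volume.restrict (Set.Ioc (0:ℝ) 1)))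
          = ∫ x in (0:ℝ)..1,
              Complex.exp ((2 * Real.pi * Complex.I * (((r:ℤ):ℂ) - (ℓ:ℂ))) * (x:ℂ)) :=
        (intervalIntegral.integral_of_le zero_le_one).symm
      rw [hi1, integral_exp_mul_complex hb]
      have he1 : Complex.exp ((2 * (Real.pi:ℂ) * Complex.I * (((r:ℤ):ℂ) - (ℓ:ℂ))) * ((1:ℝ):ℂ))
          = 1 := by
        rw [show ((2 * (Real.pi:ℂ) * Complex.I * (((r:ℤ):ℂ) - (ℓ:ℂ))) * ((1:ℝ):ℂ))
            = (((r - ℓ : ℤ):ℂ)) * (2 * Real.pi * Complex.I) from by push_cast; ring]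
        exact Complex.exp_int_mul_two_pi_mul_I (r - ℓ)
      rw [he1]
      simp
  -- combine
  rw [hR0] at hinter
  have hsingle : (∑' r : {r : ℤ // r ≡ ℓ [ZMOD 2*m]},
      (∫ x, f r x ∂(MeasureTheory.volume.restrict (Set.Ioc (0:ℝ) 1))))
      = Complex.exp (2 * Real.pi * Complex.I * ((ℓ:ℂ)^2 * τ / (4*m))) := by
    have hb : (⟨ℓ, Int.ModEq.refl ℓ⟩ : {r : ℤ // r ≡ ℓ [ZMOD 2*m]})
        ∈ (Set.univ : Set {r : ℤ // r ≡ ℓ [ZMOD 2*m]}) := trivial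
    rw [tsum_eq_single (⟨ℓ, Int.ModEq.refl ℓ⟩ : {r : ℤ // r ≡ ℓ [ZMOD 2*m]}) ?_]
    · rw [hint]
      simp
    · intro b hb'
      rw [hint]
      rw [if_neg]
      intro hc
      exact hb' (Subtype.ext hc)
  rw [hsingle] at hinter
  exact Complex.exp_ne_zero _ hinter


end SkewAux
end

/-- For `h` twice continuously differentiable on `ℍ` and fixed `τ ∈ ℍ`, the function
`Φ(τ, z) = h(τ) ϑ_{m,ℓ}(τ, z)` is annihilated by `C^sk_{k,m}` at `τ` (for all `z`)
iff `2iv(k − 1/2) ∂_τ h + 4v² ∂_τ ∂_τ̄ h = 0` at `τ`, where `v = Im τ`. -/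
theorem skewCasimir_htheta_eq_zero_iff (k m ℓ : ℤ) (hm : 1 ≤ m) (h : ℂ → ℂ)
    (hh : ContDiffOn ℝ 2 h {τ : ℂ | 0 < τ.im}) (τ : ℂ) (hτ : 0 < τ.im) :
    (∀ z : ℂ, skewCasimir k m (fun w z => h w * jacobiThetaML m ℓ w z) τ z = 0) ↔
      2 * Complex.I * (τ.im : ℂ) * ((k : ℂ) - 1 / 2) * dTau h τ +
        4 * (τ.im : ℂ) ^ 2 * dTau (dTauBar h) τ = 0 := by

  constructor
  · intro H
    obtain ⟨z0, hz0⟩ := SkewAux.theta_exists_ne_zero (ℓ := ℓ) hm hτ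
    have h1 := H z0
    rw [SkewAux.skewCasimir_eq ℓ hm hh hτ z0] at h1
    rcases mul_eq_zero.mp h1 with h2 | h3
    · rcases mul_eq_zero.mp h2 with h4 | h5
      · norm_num at h4
      · exact absurd h5 hz0
    · exact h3
  · intro hE z
    rw [SkewAux.skewCasimir_eq ℓ hm hh hτ z, hE, mul_zero]
end

section
/- Let k ∈ ℤ, let m ≥ 1 and ℓ be integers, and let g : ℍ → ℂ be twice continuously differentiable (as a function of (u, v) with τ = u + iv) with Δ_{k−1/2} g = 0 on ℍ. Define h : ℍ → ℂ by h(τ) := g(−τ̄). Then the function Φ(τ, z) := h(τ) ϑ_{m,ℓ}(τ, z) satisfies (C^sk_{k,m} Φ)(τ, z) = 0 for all (τ, z) ∈ ℍ × ℂ. -/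
open Complex ComplexConjugate

section Wirtinger
variable {f g : ℂ → ℂ} {τ : ℂ}

lemma partialDeriv_of_hasFDerivAt {f' : ℂ →L[ℝ] ℂ} (hf : HasFDerivAt f f' τ) (e : ℂ) :
    partialDeriv e f τ = f' e := by rw [partialDeriv, hf.fderiv]

lemma partialDeriv_mul (hf : DifferentiableAt ℝ f τ) (hg : DifferentiableAt ℝ g τ) (e : ℂ) :
    partialDeriv e (fun w => f w * g w) τ
      = partialDeriv e f τ * g τ + f τ * partialDeriv e g τ := by
  simp only [partialDeriv, fderiv_fun_mul hf hg, ContinuousLinearMap.add_apply,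
    ContinuousLinearMap.coe_smul', Pi.smul_apply, smul_eq_mul]
  ring

lemma dTauBar_mul (hf : DifferentiableAt ℝ f τ) (hg : DifferentiableAt ℝ g τ) :
    dTauBar (fun w => f w * g w) τ = dTauBar f τ * g τ + f τ * dTauBar g τ := by
  simp only [dTauBar, partialDeriv_mul hf hg]; ring

lemma dTau_mul (hf : DifferentiableAt ℝ f τ) (hg : DifferentiableAt ℝ g τ) :
    dTau (fun w => f w * g w) τ = dTau f τ * g τ + f τ * dTau g τ := by
  simp only [dTau, partialDeriv_mul hf hg]; ring

lemma partialDeriv_of_holo (hf : DifferentiableAt ℂ f τ) (e : ℂ) :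
    partialDeriv e f τ = e * deriv f τ := by
  have h := (hf.hasDerivAt.hasFDerivAt).restrictScalars ℝ
  rw [partialDeriv_of_hasFDerivAt h]
  simp

lemma dTauBar_of_holo (hf : DifferentiableAt ℂ f τ) : dTauBar f τ = 0 := by
  simp only [dTauBar, partialDeriv_of_holo hf, one_mul, ← mul_assoc, Complex.I_mul_I]
  ring

lemma dTau_of_holo (hf : DifferentiableAt ℂ f τ) : dTau f τ = deriv f τ := by
  simp only [dTau, partialDeriv_of_holo hf, one_mul, ← mul_assoc, Complex.I_mul_I]
  ring

lemma dTauBar_congr (h : f =ᶠ[nhds τ] g) : dTauBar f τ = dTauBar g τ := by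
  simp only [dTauBar, partialDeriv, h.fderiv_eq]

lemma dTau_congr (h : f =ᶠ[nhds τ] g) : dTau f τ = dTau g τ := by
  simp only [dTau, partialDeriv, h.fderiv_eq]
lemma partialDeriv_const_mul (c : ℂ) (hf : DifferentiableAt ℝ f τ) (e : ℂ) :
    partialDeriv e (fun w => c * f w) τ = c * partialDeriv e f τ := by
  simp only [partialDeriv, fderiv_const_mul hf c]
  simp

lemma partialDeriv_sub (hf : DifferentiableAt ℝ f τ) (hg : DifferentiableAt ℝ g τ) (e : ℂ) :
    partialDeriv e (fun w => f w - g w) τ = partialDeriv e f τ - partialDeriv e g τ := by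
  simp only [partialDeriv, fderiv_fun_sub hf hg]
  simp

lemma partialDeriv_neg (f : ℂ → ℂ) (τ e : ℂ) :
    partialDeriv e (fun w => -(f w)) τ = -partialDeriv e f τ := by
  simp only [partialDeriv, fderiv_neg]
  simp

lemma dTauBar_const_mul (c : ℂ) (hf : DifferentiableAt ℝ f τ) :
    dTauBar (fun w => c * f w) τ = c * dTauBar f τ := by
  simp only [dTauBar, partialDeriv_const_mul c hf]
  ring

end Wirtinger

section Theta
variable (m ℓ : ℤ)

def rIdx (n : ℤ) : ℤ := ℓ + 2 * m * n

noncomputable def thTerm (s : ℤ) (w z : ℂ) : ℂ :=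
  cexp (((2 * Real.pi * (s : ℝ) ^ 2 / (4 * m) : ℝ) : ℂ) * Complex.I * w +
    ((2 * Real.pi * (s : ℝ) : ℝ) : ℂ) * Complex.I * z)

noncomputable def aC (s : ℤ) : ℂ := ((2 * Real.pi * (s : ℝ) ^ 2 / (4 * m) : ℝ) : ℂ) * Complex.I
noncomputable def bC (s : ℤ) : ℂ := ((2 * Real.pi * (s : ℝ) : ℝ) : ℂ) * Complex.I

variable {m ℓ}

lemma rIdx_injective (hm : 1 ≤ m) : Function.Injective (rIdx m ℓ) := by
  intro a b hab
  simp only [rIdx] at hab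
  have h2m : (2 * m : ℤ) ≠ 0 := by omega
  have : 2 * m * a = 2 * m * b := by omega
  exact mul_left_cancel₀ h2m this

noncomputable def thetaEquiv (hm : 1 ≤ m) : ℤ ≃ {r : ℤ // r ≡ ℓ [ZMOD 2 * m]} where
  toFun n := ⟨rIdx m ℓ n, by
    exact Int.modEq_iff_dvd.mpr ⟨-n, by simp [rIdx]⟩⟩
  invFun r := ((r : ℤ) - ℓ) / (2 * m)
  left_inv n := by
    simp only [rIdx, add_sub_cancel_left]
    exact Int.mul_ediv_cancel_left n (by omega)
  right_inv r := by
    ext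
    have hd : (2 * m : ℤ) ∣ (r : ℤ) - ℓ := (r.2.symm).dvd
    simp only [rIdx]
    rw [Int.mul_ediv_cancel' hd]
    ring

lemma theta_eq (hm : 1 ≤ m) (w z : ℂ) :
    jacobiThetaML m ℓ w z = ∑' n : ℤ, thTerm m (rIdx m ℓ n) w z := by
  rw [jacobiThetaML, ← Equiv.tsum_eq (thetaEquiv hm)]
  refine tsum_congr fun n => ?_
  congr 1
  show 2 * (Real.pi : ℂ) * Complex.I *
      (((rIdx m ℓ n : ℤ) : ℂ) ^ 2 * w / (4 * m) + ((rIdx m ℓ n : ℤ) : ℂ) * z) = _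
  push_cast
  ring

lemma thTerm_norm_le (hm : 1 ≤ m) {T S : ℝ} (s : ℤ) {w z : ℂ} (hw : T ≤ w.im)
    (hz : |z.im| ≤ S) :
    ‖thTerm m s w z‖ ≤ Real.exp (-Real.pi * (T / (2 * m) * (s : ℝ) ^ 2 - 2 * S * |(s : ℝ)|)) := by
  rw [thTerm, Complex.norm_exp, Real.exp_le_exp]
  have hre : ((((2 * Real.pi * (s : ℝ) ^ 2 / (4 * m) : ℝ) : ℂ) * Complex.I * w +
      ((2 * Real.pi * (s : ℝ) : ℝ) : ℂ) * Complex.I * z).re)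
      = -(2 * Real.pi * (s : ℝ) ^ 2 / (4 * m) * w.im + 2 * Real.pi * (s : ℝ) * z.im) := by
    simp only [Complex.add_re, Complex.mul_re, Complex.mul_im, Complex.I_re, Complex.I_im,
      Complex.ofReal_re, Complex.ofReal_im]
    ring
  rw [hre]
  have hπ := Real.pi_pos
  have hm' : (1 : ℝ) ≤ (m : ℝ) := by exact_mod_cast hm
  have hs2 : (0 : ℝ) ≤ (s : ℝ) ^ 2 := sq_nonneg _
  have h1 : 2 * Real.pi * (s : ℝ) ^ 2 / (4 * m) * T ≤ 2 * Real.pi * (s : ℝ) ^ 2 / (4 * m) * w.im := by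
    have hc : (0 : ℝ) ≤ 2 * Real.pi * (s : ℝ) ^ 2 / (4 * m) := by positivity
    exact mul_le_mul_of_nonneg_left hw hc
  have h2 : -(2 * Real.pi * |(s : ℝ)| * S) ≤ 2 * Real.pi * (s : ℝ) * z.im := by
    have : |2 * Real.pi * (s : ℝ) * z.im| ≤ 2 * Real.pi * |(s : ℝ)| * S := by
      rw [abs_mul, abs_mul]
      have h0 : |2 * Real.pi| = 2 * Real.pi := abs_of_pos (by positivity)
      rw [h0]
      have := mul_le_mul_of_nonneg_left hz (abs_nonneg (s : ℝ))
      nlinarith [abs_nonneg (s:ℝ), Real.pi_pos]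
    linarith [neg_abs_le (2 * Real.pi * (s : ℝ) * z.im)]
  have hTeq : Real.pi * (T / (2 * m)) * (s : ℝ) ^ 2 = 2 * Real.pi * (s : ℝ) ^ 2 / (4 * m) * T := by
    field_simp; ring
  nlinarith [h1, h2]

lemma summable_bound (hm : 1 ≤ m) {T : ℝ} (hT : 0 < T) (S : ℝ) (j : ℕ) :
    Summable (fun n : ℤ => |(rIdx m ℓ n : ℝ)| ^ j *
      Real.exp (-Real.pi * (T / (2 * m) * (rIdx m ℓ n : ℝ) ^ 2 - 2 * S * |(rIdx m ℓ n : ℝ)|))) := by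
  have hm' : (0 : ℝ) < (m : ℝ) := by exact_mod_cast (by omega : (0:ℤ) < m)
  have hT' : 0 < T / (2 * m) := by positivity
  have h := Summable.comp_injective (summable_pow_mul_jacobiTheta₂_term_bound S hT' j)
    (rIdx_injective (ℓ := ℓ) hm)
  refine h.congr fun n => ?_
  simp only [Function.comp_apply, Int.cast_abs]

lemma thTerm_hasDerivAt_w (s : ℤ) (z w : ℂ) :
    HasDerivAt (fun w' => thTerm m s w' z) (aC m s * thTerm m s w z) w := by
  have h : HasDerivAt (fun w' => aC m s * w' + bC s * z) (aC m s) w := by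
    simpa using ((hasDerivAt_id w).const_mul (aC m s)).add_const (bC s * z)
  have := h.cexp
  simpa [thTerm, aC, bC, mul_comm] using this

lemma thTerm_hasDerivAt_z (s : ℤ) (w z : ℂ) :
    HasDerivAt (fun z' => thTerm m s w z') (bC s * thTerm m s w z) z := by
  have h : HasDerivAt (fun z' => aC m s * w + bC s * z') (bC s) z := by
    simpa using HasDerivAt.const_add (aC m s * w) ((hasDerivAt_id z).const_mul (bC s))
  have := h.cexp
  simpa [thTerm, aC, bC, mul_comm] using this

lemma norm_aC (hm : 1 ≤ m) (s : ℤ) :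
    ‖aC m s‖ = Real.pi / (2 * m) * |(s : ℝ)| ^ 2 := by
  have hm' : (0 : ℝ) < (m : ℝ) := by exact_mod_cast (by omega : (0:ℤ) < m)
  rw [aC, norm_mul, Complex.norm_I, mul_one, Complex.norm_real, Real.norm_eq_abs,
    _root_.abs_of_nonneg (by positivity : (0:ℝ) ≤ 2 * Real.pi * (s:ℝ)^2 / (4 * m)), _root_.sq_abs]
  field_simp
  ring

lemma norm_bC (s : ℤ) : ‖bC s‖ = 2 * Real.pi * |(s : ℝ)| := by
  rw [bC, norm_mul, Complex.norm_I, mul_one, Complex.norm_real, Real.norm_eq_abs, abs_mul,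
    _root_.abs_of_nonneg (by positivity : (0:ℝ) ≤ 2 * Real.pi)]

lemma summable_thTerm (hm : 1 ≤ m) {w : ℂ} (hw : 0 < w.im) (z : ℂ) :
    Summable (fun n : ℤ => thTerm m (rIdx m ℓ n) w z) := by
  refine Summable.of_norm_bounded (summable_bound (ℓ := ℓ) hm hw (|z.im|) 0) (fun n => ?_)
  simpa [pow_zero] using thTerm_norm_le (z := z) hm (rIdx m ℓ n) (le_refl w.im) (le_refl |z.im|)

lemma hasDerivAt_thSum_w (hm : 1 ≤ m) (z : ℂ) {τ : ℂ} (hτ : 0 < τ.im) :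
    HasDerivAt (fun w => ∑' n : ℤ, thTerm m (rIdx m ℓ n) w z)
      (∑' n : ℤ, aC m (rIdx m ℓ n) * thTerm m (rIdx m ℓ n) τ z) τ := by
  set T : ℝ := τ.im / 2 with hT
  have hT0 : 0 < T := by positivity
  set S : ℝ := |z.im| with hS
  refine hasDerivAt_tsum_of_isPreconnected
    (u := fun n : ℤ => Real.pi / (2 * m) * (|(rIdx m ℓ n : ℝ)| ^ 2 *
      Real.exp (-Real.pi * (T / (2 * m) * (rIdx m ℓ n : ℝ) ^ 2 - 2 * S * |(rIdx m ℓ n : ℝ)|))))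
    (t := {w : ℂ | T < w.im}) (y₀ := τ)
    ((summable_bound (ℓ := ℓ) hm hT0 S 2).mul_left _)
    (isOpen_lt continuous_const continuous_im)
    (convex_halfSpace_im_gt T).isPreconnected
    (fun n w _ => thTerm_hasDerivAt_w (rIdx m ℓ n) z w)
    (fun n w hw => ?_) (by simp [hT]; linarith) (summable_thTerm hm hτ z)
    (by simp [hT]; linarith)
  rw [norm_mul, norm_aC hm, mul_assoc]
  refine mul_le_mul_of_nonneg_left ?_ (by positivity)
  refine mul_le_mul_of_nonneg_left ?_ (by positivity)
  exact thTerm_norm_le hm _ (le_of_lt hw) (le_refl S)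

lemma hasDerivAt_thSum_z (hm : 1 ≤ m) {τ : ℂ} (hτ : 0 < τ.im) (j : ℕ) (z : ℂ) :
    HasDerivAt (fun z' => ∑' n : ℤ, bC (rIdx m ℓ n) ^ j * thTerm m (rIdx m ℓ n) τ z')
      (∑' n : ℤ, bC (rIdx m ℓ n) ^ (j + 1) * thTerm m (rIdx m ℓ n) τ z) z := by
  set S : ℝ := |z.im| + 1 with hS
  have hS0 : |z.im| < S := by simp [hS]
  rw [show (∑' n : ℤ, bC (rIdx m ℓ n) ^ (j + 1) * thTerm m (rIdx m ℓ n) τ z)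
      = ∑' n : ℤ, bC (rIdx m ℓ n) ^ j * (bC (rIdx m ℓ n) * thTerm m (rIdx m ℓ n) τ z) from
    tsum_congr fun n => by ring]
  refine hasDerivAt_tsum_of_isPreconnected
    (u := fun n : ℤ => (2 * Real.pi) ^ (j + 1) * (|(rIdx m ℓ n : ℝ)| ^ (j + 1) *
      Real.exp (-Real.pi * (τ.im / (2 * m) * (rIdx m ℓ n : ℝ) ^ 2 - 2 * S * |(rIdx m ℓ n : ℝ)|))))
    (t := {z' : ℂ | |z'.im| < S}) (y₀ := z)
    ((summable_bound (ℓ := ℓ) hm hτ S (j + 1)).mul_left _)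
    (((_root_.continuous_abs.comp continuous_im).isOpen_preimage _ isOpen_Iio))
    (by
      refine Convex.isPreconnected ?_
      simpa only [abs_lt, Set.setOf_and] using (convex_halfSpace_im_gt (-S)).inter (convex_halfSpace_im_lt S))
    (fun n z' _ =>
      (thTerm_hasDerivAt_z (m := m) (rIdx m ℓ n) τ z').const_mul (bC (rIdx m ℓ n) ^ j))
    (fun n z' hz' => ?_) hS0 ?_ hS0
  · rw [show bC (rIdx m ℓ n) ^ j * (bC (rIdx m ℓ n) * thTerm m (rIdx m ℓ n) τ z')
        = bC (rIdx m ℓ n) ^ (j + 1) * thTerm m (rIdx m ℓ n) τ z' from by ring]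
    rw [norm_mul, norm_pow, norm_bC, mul_pow, mul_assoc]
    refine mul_le_mul_of_nonneg_left ?_ (by positivity)
    refine mul_le_mul_of_nonneg_left ?_ (by positivity)
    exact thTerm_norm_le hm _ (le_refl τ.im) (le_of_lt hz')
  · refine Summable.of_norm_bounded ((summable_bound (ℓ := ℓ) hm hτ S j).mul_left
      ((2 * Real.pi) ^ j)) (fun n => ?_)
    rw [norm_mul, norm_pow, norm_bC, mul_pow, mul_assoc]
    refine mul_le_mul_of_nonneg_left ?_ (by positivity)
    refine mul_le_mul_of_nonneg_left ?_ (by positivity)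
    exact thTerm_norm_le hm _ (le_refl τ.im) (le_of_lt hS0)

lemma hasDerivAt_theta_w (hm : 1 ≤ m) (z : ℂ) {τ : ℂ} (hτ : 0 < τ.im) :
    HasDerivAt (fun w => jacobiThetaML m ℓ w z)
      (∑' n : ℤ, aC m (rIdx m ℓ n) * thTerm m (rIdx m ℓ n) τ z) τ := by
  have H := hasDerivAt_thSum_w (ℓ := ℓ) hm z hτ
  simp only [← theta_eq hm] at H
  exact H

lemma heat_coeff (hm : 1 ≤ m) (s : ℤ) :
    bC s ^ 2 = 8 * (Real.pi : ℂ) * Complex.I * (m : ℂ) * aC m s := by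
  have hm0 : ((m : ℝ) : ℂ) ≠ 0 := by
    simp only [ne_eq, Complex.ofReal_eq_zero, Int.cast_eq_zero]
    exact_mod_cast (by omega : m ≠ 0)
  rw [bC, aC]
  push_cast
  rw [mul_pow, Complex.I_sq]
  field_simp
  have h4m : (4 : ℂ) * (m : ℂ) ≠ 0 :=
    mul_ne_zero (by norm_num) (Int.cast_ne_zero.mpr (by omega))
  have hmC : ((m:ℤ):ℂ) ≠ 0 := Int.cast_ne_zero.mpr (by omega)
  rw [mul_div_assoc, div_self hmC, Complex.I_sq]
  ring

lemma deriv1_theta (hm : 1 ≤ m) {τ : ℂ} (hτ : 0 < τ.im) (Cst : ℂ) :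
    deriv (fun z' => Cst * jacobiThetaML m ℓ τ z')
      = fun z' => Cst * ∑' n : ℤ, bC (rIdx m ℓ n) * thTerm m (rIdx m ℓ n) τ z' := by
  funext z'
  have H := hasDerivAt_thSum_z (ℓ := ℓ) hm hτ 0 z'
  simp only [pow_zero, one_mul, zero_add, pow_one] at H
  have H2 : HasDerivAt (fun z' => Cst * jacobiThetaML m ℓ τ z')
      (Cst * ∑' n : ℤ, bC (rIdx m ℓ n) * thTerm m (rIdx m ℓ n) τ z') z' := by
    simp only [theta_eq hm]
    exact H.const_mul Cst
  exact H2.deriv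

lemma iteratedDeriv2_theta (hm : 1 ≤ m) {τ : ℂ} (hτ : 0 < τ.im) (Cst : ℂ) (z : ℂ) :
    iteratedDeriv 2 (fun z' => Cst * jacobiThetaML m ℓ τ z') z
      = Cst * ∑' n : ℤ, bC (rIdx m ℓ n) ^ 2 * thTerm m (rIdx m ℓ n) τ z := by
  rw [show (2 : ℕ) = 1 + 1 from rfl, iteratedDeriv_succ, iteratedDeriv_one,
    deriv1_theta hm hτ Cst]
  have H := (hasDerivAt_thSum_z (ℓ := ℓ) hm hτ 1 z).const_mul Cst
  simp only [pow_one] at H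
  norm_num at H
  exact H.deriv

end Theta

/-- If `g` is twice continuously differentiable on `ℍ` with `Δ_{k−1/2} g = 0`, and
`h(τ) := g(−τ̄)`, then `Φ(τ, z) := h(τ) ϑ_{m,ℓ}(τ, z)` is annihilated by the skew
Casimir operator `C^sk_{k,m}` on `ℍ × ℂ`. -/
theorem skewCasimir_of_harmonic (k m ℓ : ℤ) (hm : 1 ≤ m) (g : ℂ → ℂ)
    (hg : ContDiffOn ℝ 2 g {τ : ℂ | 0 < τ.im})
    (hΔ : ∀ τ : ℂ, 0 < τ.im → hypLaplacian ((k : ℝ) - 1 / 2) g τ = 0) :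
    ∀ τ z : ℂ, 0 < τ.im →
      skewCasimir k m (fun w z => g (-(conj w)) * jacobiThetaML m ℓ w z) τ z = 0 := by
  intro τ z hτ
  have hO : IsOpen {w : ℂ | 0 < w.im} := isOpen_lt continuous_const continuous_im
  have hv : 0 < τ.im := hτ
  have hσpos : 0 < (-(conj τ)).im := by simpa using hv
  -- abbreviations
  set G' : ℂ → (ℂ →L[ℝ] ℂ) := fderiv ℝ g with hG'
  set G'' : ℂ → (ℂ →L[ℝ] ℂ →L[ℝ] ℂ) := fderiv ℝ G' with hG''
  -- differentiability of g
  have hgd : ∀ w : ℂ, 0 < w.im → HasFDerivAt g (G' w) w := fun w hw =>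
    ((hg.differentiableOn (by norm_num)).differentiableAt (hO.mem_nhds hw)).hasFDerivAt
  have hg'd : ∀ w : ℂ, 0 < w.im → HasFDerivAt G' (G'' w) w := fun w hw =>
    (((hg.fderiv_of_isOpen (m := 1) hO (by norm_num)).differentiableOn
      (by norm_num)).differentiableAt (hO.mem_nhds hw)).hasFDerivAt
  have hsymm : ∀ a b : ℂ, G'' (-(conj τ)) a b = G'' (-(conj τ)) b a := fun a b =>
    second_derivative_symmetric_of_eventually
      (Filter.eventually_of_mem (hO.mem_nhds hσpos) (fun y hy => hgd y hy))
      (hg'd _ hσpos) a b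
  -- the antiholomorphic linear map
  set N : ℂ →L[ℝ] ℂ := -(Complex.conjCLE.toContinuousLinearMap) with hNdef
  have hNapp : ∀ w : ℂ, N w = -(conj w) := fun w => by
    simp [hNdef]
  have hNfun : (⇑N : ℂ → ℂ) = fun w => -(conj w) := funext hNapp
  have hNd : ∀ w : ℂ, HasFDerivAt (fun w : ℂ => -(conj w)) N w := fun w => by
    rw [← hNfun]; exact N.hasFDerivAt
  have hN1 : N (1 : ℂ) = -1 := by rw [hNapp]; simp
  have hNI : N Complex.I = Complex.I := by rw [hNapp]; simp
  -- derivative of h(w) = g(-(conj w))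
  have hhd : ∀ w : ℂ, 0 < w.im →
      HasFDerivAt (fun w => g (-(conj w))) ((G' (-(conj w))).comp N) w := fun w hw => by
    have hgw := hgd (-(conj w)) (by simpa using hw)
    exact hgw.comp w (hNd w)
  -- second-order data
  have hP : ∀ e : ℂ, HasFDerivAt (fun w => G' (-(conj w)) e)
      ((ContinuousLinearMap.apply ℝ ℂ e).comp ((G'' (-(conj τ))).comp N)) τ := by
    intro e
    have h1 : HasFDerivAt (fun w : ℂ => G' (-(conj w))) ((G'' (-(conj τ))).comp N) τ := by
      have h2 := (hg'd (-(conj τ)) hσpos).comp τ (hNd τ)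
      exact h2
    have h3 := (ContinuousLinearMap.apply ℝ ℂ e).hasFDerivAt.comp τ h1
    exact h3
  have hPd : ∀ e : ℂ, DifferentiableAt ℝ (fun w => G' (-(conj w)) e) τ :=
    fun e => (hP e).differentiableAt
  -- value of dTau h on the upper half plane
  have hdTauh : ∀ w : ℂ, 0 < w.im → dTau (fun w => g (-(conj w))) w
      = (1/2 : ℂ) * (-(G' (-(conj w)) 1) - Complex.I * (G' (-(conj w)) Complex.I)) := by
    intro w hw
    have hcomp1 : ((G' (-(conj w))).comp N) 1 = -(G' (-(conj w)) 1) := by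
      rw [ContinuousLinearMap.comp_apply, hN1, map_neg]
    have hcompI : ((G' (-(conj w))).comp N) Complex.I = G' (-(conj w)) Complex.I := by
      rw [ContinuousLinearMap.comp_apply, hNI]
    simp only [dTau, partialDeriv_of_hasFDerivAt (hhd w hw) 1,
      partialDeriv_of_hasFDerivAt (hhd w hw) Complex.I, hcomp1, hcompI]
  -- differentiability of Bt
  have hBtd : DifferentiableAt ℝ
      (fun w => (1/2 : ℂ) * (-(G' (-(conj w)) 1) - Complex.I * (G' (-(conj w)) Complex.I))) τ :=
    (((hPd 1).neg.sub ((hPd Complex.I).const_mul Complex.I)).const_mul (1/2 : ℂ))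
  -- partial derivatives of Bt
  have hpdBt : ∀ e : ℂ, partialDeriv e
      (fun w => (1/2 : ℂ) * (-(G' (-(conj w)) 1) - Complex.I * (G' (-(conj w)) Complex.I))) τ
      = (1/2 : ℂ) * (-(G'' (-(conj τ)) (N e) 1)
          - Complex.I * (G'' (-(conj τ)) (N e) Complex.I)) := by
    intro e
    rw [partialDeriv_const_mul _ ((hPd 1).fun_neg.fun_sub ((hPd Complex.I).const_mul Complex.I)),
      partialDeriv_sub (hPd 1).fun_neg ((hPd Complex.I).const_mul Complex.I),
      partialDeriv_neg, partialDeriv_const_mul _ (hPd Complex.I),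
      partialDeriv_of_hasFDerivAt (hP 1), partialDeriv_of_hasFDerivAt (hP Complex.I)]
    simp only [ContinuousLinearMap.comp_apply, ContinuousLinearMap.apply_apply]
  -- dTauBar of Bt
  have hdBt : dTauBar
      (fun w => (1/2 : ℂ) * (-(G' (-(conj w)) 1) - Complex.I * (G' (-(conj w)) Complex.I))) τ
      = (1/4 : ℂ) * (G'' (-(conj τ)) 1 1 + G'' (-(conj τ)) Complex.I Complex.I) := by
    have hsym1I : G'' (-(conj τ)) 1 Complex.I = G'' (-(conj τ)) Complex.I 1 := hsymm 1 Complex.I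
    simp only [dTauBar, hpdBt 1, hpdBt Complex.I, hN1, hNI, map_neg,
      ContinuousLinearMap.neg_apply]
    linear_combination (Complex.I/4) * hsym1I
      - (G'' (-(conj τ)) Complex.I Complex.I / 4) * Complex.I_sq
  -- the rpow factor
  have hAder : HasFDerivAt (fun w : ℂ => ((w.im ^ ((k:ℝ) - 1/2) : ℝ) : ℂ))
      (Complex.ofRealCLM.comp ((((k:ℝ) - 1/2) * τ.im ^ (((k:ℝ) - 1/2) - 1)) • Complex.imCLM))
      τ := by
    have h1 : HasFDerivAt (fun w : ℂ => w.im ^ ((k:ℝ) - 1/2))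
        ((((k:ℝ) - 1/2) * τ.im ^ (((k:ℝ) - 1/2) - 1)) • Complex.imCLM) τ := by
      have h2 := (Real.hasDerivAt_rpow_const (x := τ.im) (p := (k:ℝ) - 1/2)
        (Or.inl (ne_of_gt hv))).comp_hasFDerivAt τ Complex.imCLM.hasFDerivAt
      exact h2
    have h3 := Complex.ofRealCLM.hasFDerivAt.comp τ h1
    exact h3
  have hAd : DifferentiableAt ℝ (fun w : ℂ => ((w.im ^ ((k:ℝ) - 1/2) : ℝ) : ℂ)) τ :=
    hAder.differentiableAt
  have hdA : dTauBar (fun w : ℂ => ((w.im ^ ((k:ℝ) - 1/2) : ℝ) : ℂ)) τ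
      = (1/2 : ℂ) * Complex.I * ((((k:ℝ) - 1/2) * τ.im ^ (((k:ℝ) - 1/2) - 1) : ℝ) : ℂ) := by
    simp only [dTauBar, partialDeriv_of_hasFDerivAt hAder 1,
      partialDeriv_of_hasFDerivAt hAder Complex.I]
    simp [Complex.ofRealCLM_apply]
    ring
  -- theta-function facts at τ
  have hΘτ := hasDerivAt_theta_w (ℓ := ℓ) hm z hτ
  have hΘdC : DifferentiableAt ℂ (fun w => jacobiThetaML m ℓ w z) τ := hΘτ.differentiableAt
  have hΘdR : DifferentiableAt ℝ (fun w => jacobiThetaML m ℓ w z) τ := hΘdC.restrictScalars ℝ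
  -- evaluation of the heat operator on the upper half-plane
  have hheat : ∀ w : ℂ, 0 < w.im →
      heatOp m (fun w z => g (-(conj w)) * jacobiThetaML m ℓ w z) w z
        = 8 * Real.pi * Complex.I * (m:ℂ) *
          (((1/2 : ℂ) * (-(G' (-(conj w)) 1) - Complex.I * (G' (-(conj w)) Complex.I)))
            * jacobiThetaML m ℓ w z) := by
    intro w hw
    have hΘw := hasDerivAt_theta_w (ℓ := ℓ) hm z hw
    have hΘwR : DifferentiableAt ℝ (fun w' => jacobiThetaML m ℓ w' z) w :=
      hΘw.differentiableAt.restrictScalars ℝ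
    have hhdR : DifferentiableAt ℝ (fun w' => g (-(conj w'))) w := (hhd w hw).differentiableAt
    simp only [heatOp]
    rw [dTau_mul hhdR hΘwR, dTau_of_holo hΘw.differentiableAt, hΘw.deriv,
      iteratedDeriv2_theta hm hw (g (-(conj w))) z, hdTauh w hw]
    have hsum : (∑' n : ℤ, bC (rIdx m ℓ n) ^ 2 * thTerm m (rIdx m ℓ n) w z)
        = 8 * Real.pi * Complex.I * (m:ℂ) *
          ∑' n : ℤ, aC m (rIdx m ℓ n) * thTerm m (rIdx m ℓ n) w z := by
      rw [← tsum_mul_left]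
      exact tsum_congr fun n => by rw [heat_coeff hm]; ring
    rw [hsum]
    ring
  -- eventual equality of the inner function
  have hev : (fun w => ((w.im ^ ((k:ℝ) - 1/2) : ℝ) : ℂ) *
        heatOp m (fun w z => g (-(conj w)) * jacobiThetaML m ℓ w z) w z)
      =ᶠ[nhds τ] (fun w => ((w.im ^ ((k:ℝ) - 1/2) : ℝ) : ℂ) *
        (8 * Real.pi * Complex.I * (m:ℂ) *
          (((1/2 : ℂ) * (-(G' (-(conj w)) 1) - Complex.I * (G' (-(conj w)) Complex.I)))
            * jacobiThetaML m ℓ w z))) :=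
    Filter.eventually_of_mem (hO.mem_nhds hτ) (fun w hw => by simp only [hheat w hw])
  -- main dTauBar computation
  have hmain : dTauBar (fun w => ((w.im ^ ((k:ℝ) - 1/2) : ℝ) : ℂ) *
        heatOp m (fun w z => g (-(conj w)) * jacobiThetaML m ℓ w z) w z) τ
      = ((1/2 : ℂ) * Complex.I * ((((k:ℝ) - 1/2) * τ.im ^ (((k:ℝ) - 1/2) - 1) : ℝ) : ℂ)) *
          (8 * Real.pi * Complex.I * (m:ℂ) *
            (((1/2 : ℂ) * (-(G' (-(conj τ)) 1) - Complex.I * (G' (-(conj τ)) Complex.I)))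
              * jacobiThetaML m ℓ τ z))
        + ((τ.im ^ ((k:ℝ) - 1/2) : ℝ) : ℂ) *
          (8 * Real.pi * Complex.I * (m:ℂ) *
            (((1/4 : ℂ) * (G'' (-(conj τ)) 1 1 + G'' (-(conj τ)) Complex.I Complex.I))
              * jacobiThetaML m ℓ τ z)) := by
    rw [dTauBar_congr hev]
    have hGd : DifferentiableAt ℝ (fun w =>
        (((1/2 : ℂ) * (-(G' (-(conj w)) 1) - Complex.I * (G' (-(conj w)) Complex.I)))
          * jacobiThetaML m ℓ w z)) τ := hBtd.mul hΘdR
    rw [dTauBar_mul hAd (hGd.const_mul _), dTauBar_const_mul _ hGd,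
      dTauBar_mul hBtd hΘdR, dTauBar_of_holo hΘdC, hdA, hdBt]
    ring
  -- the Laplace equation, written out
  have hQ : ∀ e : ℂ, HasFDerivAt (fun t => G' t e)
      ((ContinuousLinearMap.apply ℝ ℂ e).comp (G'' (-(conj τ)))) (-(conj τ)) := fun e =>
    (ContinuousLinearMap.apply ℝ ℂ e).hasFDerivAt.comp _ (hg'd _ hσpos)
  have hΔE : -((τ.im : ℂ))^2 * (G'' (-(conj τ)) 1 1 + G'' (-(conj τ)) Complex.I Complex.I)
      + Complex.I * (((k:ℝ) - 1/2 : ℝ) : ℂ) * (τ.im : ℂ) *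
        (G' (-(conj τ)) 1 + Complex.I * G' (-(conj τ)) Complex.I) = 0 := by
    have H := hΔ (-(conj τ)) hσpos
    have e1 : partialDeriv 1 g = fun t => G' t 1 := by funext t; rw [partialDeriv, hG']
    have eI : partialDeriv Complex.I g = fun t => G' t Complex.I := by
      funext t; rw [partialDeriv, hG']
    rw [hypLaplacian, e1, eI, partialDeriv_of_hasFDerivAt (hQ 1) 1,
      partialDeriv_of_hasFDerivAt (hQ Complex.I) Complex.I] at H
    simp only [ContinuousLinearMap.comp_apply, ContinuousLinearMap.apply_apply] at H
    have him : (-(conj τ)).im = τ.im := by simp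
    rw [him] at H
    convert H using 2
  -- rpow identities
  have hexp1 : (1:ℝ)/2 - (k:ℝ) + (((k:ℝ) - 1/2) - 1) = -1 := by ring
  have hexp2 : (1:ℝ)/2 - (k:ℝ) + ((k:ℝ) - 1/2) = 0 := by ring
  have hr1 : ((τ.im ^ ((1:ℝ)/2 - (k:ℝ)) : ℝ) : ℂ) * ((τ.im ^ (((k:ℝ) - 1/2) - 1) : ℝ) : ℂ)
      = ((τ.im : ℂ))⁻¹ := by
    rw [← Complex.ofReal_mul, ← Real.rpow_add hv, hexp1, Real.rpow_neg_one,
      Complex.ofReal_inv]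
  have hr2 : ((τ.im ^ ((1:ℝ)/2 - (k:ℝ)) : ℝ) : ℂ) * ((τ.im ^ ((k:ℝ) - 1/2) : ℝ) : ℂ)
      = 1 := by
    rw [← Complex.ofReal_mul, ← Real.rpow_add hv, hexp2, Real.rpow_zero, Complex.ofReal_one]
  -- final algebra
  have hπ0 : (Real.pi : ℂ) ≠ 0 := Complex.ofReal_ne_zero.mpr Real.pi_ne_zero
  have hm0 : (m : ℂ) ≠ 0 := Int.cast_ne_zero.mpr (by omega)
  have hv0 : ((τ.im : ℝ) : ℂ) ≠ 0 := Complex.ofReal_ne_zero.mpr (ne_of_gt hv)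
  rw [skewCasimir, hmain, Complex.ofReal_mul]
  have hvv : (τ.im : ℂ) * ((τ.im : ℂ))⁻¹ = 1 := mul_inv_cancel₀ hv0
  set X1 : ℂ := G' (-(conj τ)) 1 with hX1
  set XI : ℂ := G' (-(conj τ)) Complex.I with hXI
  set Y1 : ℂ := G'' (-(conj τ)) 1 1 with hY1
  set YI : ℂ := G'' (-(conj τ)) Complex.I Complex.I with hYI
  set Th : ℂ := jacobiThetaML m ℓ τ z with hTh
  set A : ℂ := ((τ.im ^ ((1:ℝ)/2 - (k:ℝ)) : ℝ) : ℂ) with hA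
  set B1 : ℂ := ((τ.im ^ (((k:ℝ) - 1/2) - 1) : ℝ) : ℂ) with hB1
  set B2 : ℂ := ((τ.im ^ ((k:ℝ) - 1/2) : ℝ) : ℂ) with hB2
  set cC : ℂ := (((k:ℝ) - 1/2 : ℝ) : ℂ) with hcC
  set vC : ℂ := (τ.im : ℂ) with hvC
  clear_value X1 XI Y1 YI Th A B1 B2 cC vC
  have hπinv : (Real.pi:ℂ) * (Real.pi:ℂ)⁻¹ = 1 := mul_inv_cancel₀ hπ0
  have hminv : (m:ℂ) * (m:ℂ)⁻¹ = 1 := mul_inv_cancel₀ hm0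
  linear_combination
    (-2 * (Real.pi:ℂ) * (Real.pi:ℂ)⁻¹ * (m:ℂ) * (m:ℂ)⁻¹ * (vC^2 * Th * (Complex.I * cC * (A * B1) * (-X1 - Complex.I * XI) + (A * B2) * (Y1 + YI)))) * Complex.I_sq
    + (2 * (vC^2 * Th * (Complex.I * cC * (A * B1) * (-X1 - Complex.I * XI) + (A * B2) * (Y1 + YI))) * (m:ℂ) * (m:ℂ)⁻¹) * hπinv
    + (2 * (vC^2 * Th * (Complex.I * cC * (A * B1) * (-X1 - Complex.I * XI) + (A * B2) * (Y1 + YI)))) * hminv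
    + (2 * vC^2 * Th * Complex.I * cC * (-X1 - Complex.I * XI)) * hr1
    + (2 * vC^2 * Th * (Y1 + YI)) * hr2
    + (2 * Th * Complex.I * cC * (-X1 - Complex.I * XI) * vC) * hvv
    - (2 * Th) * hΔE
end

section
/- Let m ≥ 1 be an integer and let c : ℤ × ℤ → ℂ be a function satisfying c(n + λr + mλ², r + 2mλ) = c(n, r) for all n, r, λ ∈ ℤ. Then c(n', r') = c(n, r) whenever n, n', r, r' ∈ ℤ satisfy r' ≡ r (mod 2m) and r'² − 4mn' = r² − 4mn. In other words, c(n, r) depends only on the discriminant D = r² − 4mn and on the residue class of r modulo 2m. -/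
/-- If `c : ℤ × ℤ → ℂ` satisfies the elliptic invariance
`c(n + λr + mλ², r + 2mλ) = c(n, r)`, then `c(n, r)` depends only on the discriminant
`D = r² − 4mn` and on `r mod 2m`. -/
theorem coeff_depends_only_on_disc_and_residue (m : ℤ) (hm : 1 ≤ m) (c : ℤ × ℤ → ℂ)
    (hc : ∀ n r l : ℤ, c (n + l * r + m * l ^ 2, r + 2 * m * l) = c (n, r)) :
    ∀ n n' r r' : ℤ, r' ≡ r [ZMOD 2 * m] →
      r' ^ 2 - 4 * m * n' = r ^ 2 - 4 * m * n → c (n', r') = c (n, r) := by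
  intro n n' r r' hmod hdisc
  obtain ⟨l, hl⟩ := (hmod.symm.dvd : (2 * m : ℤ) ∣ r' - r)
  have hr' : r' = r + 2 * m * l := by linarith
  have hm0 : (m : ℤ) ≠ 0 := by omega
  have hn' : n' = n + l * r + m * l ^ 2 := by
    have h := hdisc
    rw [hr'] at h
    have h4 : 4 * m * n' = 4 * m * (n + l * r + m * l ^ 2) := by ring_nf; ring_nf at h; linarith
    have := mul_left_cancel₀ (show (4 * m : ℤ) ≠ 0 by omega) h4
    exact this
  rw [hr', hn', hc]
end

section
/- Let m ≥ 1 be an integer, let a : ℤ × ℝ_{>0} → ℂ, and let c : ℤ × ℤ → ℂ satisfy c(n + λr + mλ², r + 2mλ) = c(n, r) for all n, r, λ ∈ ℤ. Fix τ ∈ ℍ and z ∈ ℂ with v = Im τ, and suppose the double series Σ_{(n,r) ∈ ℤ×ℤ} c(n, r) a(r² − 4mn, v) exp(2πi(nτ + rz)) converges absolutely. Then Σ_{(n,r) ∈ ℤ×ℤ} c(n, r) a(r² − 4mn, v) exp(2πi(nτ + rz)) = Σ_{ℓ=0}^{2m−1} h_ℓ(τ) ϑ_{m,ℓ}(τ,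 z), where h_ℓ(τ) := Σ_{N ∈ ℤ, N ≡ −ℓ² (mod 4m)} c((N + ℓ²)/(4m), ℓ) a(−N, v) exp(2πiNτ/(4m)) (these series also converge absolutely). -/
open Complex

section Aux
def residueEquiv (d b : ℤ) (hd : d ≠ 0) : ℤ ≃ {x : ℤ // x ≡ b [ZMOD d]} where
  toFun k := ⟨b + d * k, (Int.modEq_iff_dvd.2 ⟨-k, by ring⟩)⟩
  invFun x := ((x : ℤ) - b) / d
  left_inv k := by
    simp [add_sub_cancel_left, Int.mul_ediv_cancel_left _ hd]
  right_inv x := by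
    obtain ⟨t, ht⟩ := Int.modEq_iff_dvd.1 x.2
    have hx : (x : ℤ) = b - d * t := by linarith
    ext
    simp only [hx]
    rw [show b - d * t - b = d * (-t) by ring, Int.mul_ediv_cancel_left _ hd]
    ring

/-- The master parametrization `(l, j, k) ↦ (j + l k + m k², l + 2 m k)`. -/
def masterEquiv (m : ℤ) (hm : 0 < m) : (Fin (2 * m).toNat × ℤ × ℤ) ≃ ℤ × ℤ where
  toFun q := ((q.2.1 + (q.1 : ℤ) * q.2.2 + m * q.2.2 ^ 2, (q.1 : ℤ) + 2 * m * q.2.2))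
  invFun p :=
    (⟨(p.2 % (2 * m)).toNat, by
        have h1 : 0 ≤ p.2 % (2 * m) := Int.emod_nonneg _ (by omega)
        have h2 : p.2 % (2 * m) < 2 * m := Int.emod_lt_of_pos _ (by omega)
        omega⟩,
      p.1 - (p.2 % (2 * m)) * (p.2 / (2 * m)) - m * (p.2 / (2 * m)) ^ 2,
      p.2 / (2 * m))
  left_inv := by
    rintro ⟨l, j, k⟩
    have hl0 : (0 : ℤ) ≤ (l : ℤ) := Int.natCast_nonneg _
    have hl2 : ((l : ℕ) : ℤ) < 2 * m := by
      have := l.2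
      omega
    have hmod : ((l : ℤ) + 2 * m * k) % (2 * m) = (l : ℤ) := by
      rw [show (l : ℤ) + 2 * m * k = (l : ℤ) + (2 * m) * k by ring,
        Int.add_mul_emod_self_left, Int.emod_eq_of_lt hl0 hl2]
    have hdiv : ((l : ℤ) + 2 * m * k) / (2 * m) = k := by
      rw [show (l : ℤ) + 2 * m * k = (l : ℤ) + (2 * m) * k by ring,
        Int.add_mul_ediv_left _ _ (by omega : (2 * m : ℤ) ≠ 0),
        Int.ediv_eq_zero_of_lt hl0 hl2, zero_add]
    refine Prod.ext ?_ (Prod.ext ?_ ?_)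
    · simp [hmod]
    · simp only [hmod, hdiv]; ring
    · simp [hdiv]
  right_inv := by
    rintro ⟨n, r⟩
    have h1 : 0 ≤ r % (2 * m) := Int.emod_nonneg _ (by omega)
    have key : r % (2 * m) + 2 * m * (r / (2 * m)) = r := Int.emod_add_mul_ediv r (2 * m)
    refine Prod.ext ?_ ?_
    · simp only []
      rw [Int.toNat_of_nonneg h1]
      ring
    · simp only []
      rw [Int.toNat_of_nonneg h1]
      exact key

end Aux

set_option maxHeartbeats 1000000 in
/-- Theta decomposition: if the coefficients `c(n, r)` satisfy the elliptic invariance,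
then `Σ_{n,r} c(n,r) a(r² − 4mn, v) e(nτ + rz) = Σ_{ℓ=0}^{2m−1} h_ℓ(τ) ϑ_{m,ℓ}(τ, z)` with
`h_ℓ(τ) = Σ_{N ≡ −ℓ² (4m)} c((N + ℓ²)/(4m), ℓ) a(−N, v) e(Nτ/(4m))`,
all series converging absolutely. -/
theorem theta_decomposition (m : ℤ) (hm : 1 ≤ m) (a : ℤ → ℝ → ℂ) (c : ℤ × ℤ → ℂ)
    (hc : ∀ n r l : ℤ, c (n + l * r + m * l ^ 2, r + 2 * m * l) = c (n, r))
    (τ : ℂ) (hτ : 0 < τ.im) (z : ℂ)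
    (hsum : Summable fun p : ℤ × ℤ =>
      ‖c p * a (p.2 ^ 2 - 4 * m * p.1) τ.im *
        Complex.exp (2 * Real.pi * Complex.I * ((p.1 : ℂ) * τ + (p.2 : ℂ) * z))‖) :
    (∀ l : ℕ, l < (2 * m).toNat →
      Summable fun N : {N : ℤ // N ≡ -(l : ℤ) ^ 2 [ZMOD 4 * m]} =>
        ‖c (((N : ℤ) + (l : ℤ) ^ 2) / (4 * m), (l : ℤ)) * a (-(N : ℤ)) τ.im *
          Complex.exp (2 * Real.pi * Complex.I * (((N : ℤ) : ℂ) * τ / (4 * m)))‖) ∧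
    ∑' p : ℤ × ℤ,
        c p * a (p.2 ^ 2 - 4 * m * p.1) τ.im *
          Complex.exp (2 * Real.pi * Complex.I * ((p.1 : ℂ) * τ + (p.2 : ℂ) * z)) =
      ∑ l ∈ Finset.range (2 * m).toNat,
        (∑' N : {N : ℤ // N ≡ -(l : ℤ) ^ 2 [ZMOD 4 * m]},
            c (((N : ℤ) + (l : ℤ) ^ 2) / (4 * m), (l : ℤ)) * a (-(N : ℤ)) τ.im *
              Complex.exp (2 * Real.pi * Complex.I * (((N : ℤ) : ℂ) * τ / (4 * m)))) *
          jacobiThetaML m (l : ℤ) τ z := by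
  have hm0 : (0 : ℤ) < m := hm
  have h4m : (4 * m : ℤ) ≠ 0 := by omega
  have h4mC : (4 * (m : ℂ)) ≠ 0 := by
    simp only [ne_eq, mul_eq_zero]
    push_neg
    exact ⟨by norm_num, by exact_mod_cast (by omega : (m : ℤ) ≠ 0)⟩
  set f : ℤ × ℤ → ℂ := fun p => c p * a (p.2 ^ 2 - 4 * m * p.1) τ.im *
        Complex.exp (2 * Real.pi * Complex.I * ((p.1 : ℂ) * τ + (p.2 : ℂ) * z)) with hf
  set F : ℤ → ℤ → ℂ := fun l j => c (j, l) * a (l ^ 2 - 4 * m * j) τ.im *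
      Complex.exp (2 * Real.pi * Complex.I * (((-l ^ 2 + 4 * m * j : ℤ) : ℂ) * τ / (4 * m)))
    with hF
  set G : ℤ → ℤ → ℂ := fun l k => Complex.exp (2 * Real.pi * Complex.I *
      (((l + 2 * m * k : ℤ) : ℂ) ^ 2 * τ / (4 * m) + ((l + 2 * m * k : ℤ) : ℂ) * z)) with hG
  -- key pointwise identity
  have hkey : ∀ l j k : ℤ, f (j + l * k + m * k ^ 2, l + 2 * m * k) = F l j * G l k := by
    intro l j k
    have hcc : c (j + l * k + m * k ^ 2, l + 2 * m * k) = c (j, l) := by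
      rw [show j + l * k + m * k ^ 2 = j + k * l + m * k ^ 2 by ring]
      exact hc j l k
    have haa : ((l + 2 * m * k) ^ 2 - 4 * m * (j + l * k + m * k ^ 2) : ℤ)
        = l ^ 2 - 4 * m * j := by ring
    have hee : Complex.exp (2 * Real.pi * Complex.I *
          (((j + l * k + m * k ^ 2 : ℤ) : ℂ) * τ + ((l + 2 * m * k : ℤ) : ℂ) * z))
        = Complex.exp (2 * Real.pi * Complex.I * (((-l ^ 2 + 4 * m * j : ℤ) : ℂ) * τ / (4 * m)))
          * Complex.exp (2 * Real.pi * Complex.I *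
            (((l + 2 * m * k : ℤ) : ℂ) ^ 2 * τ / (4 * m) + ((l + 2 * m * k : ℤ) : ℂ) * z)) := by
      rw [← Complex.exp_add]
      congr 1
      push_cast
      have hmC : (m : ℂ) ≠ 0 := by exact_mod_cast (by omega : m ≠ 0)
      field_simp
      ring
    simp only [hf, hF, hG, hcc, haa, hee]
    ring
  set E := masterEquiv m hm0 with hE
  have hfE : ∀ q : Fin (2 * m).toNat × ℤ × ℤ, f (E q) = F (q.1 : ℤ) q.2.1 * G (q.1 : ℤ) q.2.2 := by
    rintro ⟨l, j, k⟩
    exact hkey (l : ℤ) j k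
  have hsumE : Summable fun q : Fin (2 * m).toNat × ℤ × ℤ => ‖f (E q)‖ := by
    have := (E.summable_iff (f := fun p => ‖f p‖)).2 hsum
    simpa [Function.comp_def] using this
  have hFG : ∀ l : Fin (2 * m).toNat,
      Summable fun jk : ℤ × ℤ => ‖F (l : ℤ) jk.1 * G (l : ℤ) jk.2‖ := by
    intro l
    have hinj : Function.Injective (fun jk : ℤ × ℤ => ((l, jk) : Fin (2 * m).toNat × ℤ × ℤ)) := by
      intro x y h
      simpa using h
    have := hsumE.comp_injective hinj
    simpa [Function.comp_def, hfE] using this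
  have hGne : ∀ l k : ℤ, G l k ≠ 0 := fun l k => Complex.exp_ne_zero _
  -- F is norm-summable
  have hFsum : ∀ l : Fin (2 * m).toNat, Summable fun j : ℤ => ‖F (l : ℤ) j‖ := by
    intro l
    have hinj : Function.Injective (fun j : ℤ => ((j, 0) : ℤ × ℤ)) := by
      intro x y h; simpa using h
    have h1 := (hFG l).comp_injective hinj
    have h2 : Summable fun j : ℤ => ‖G (l : ℤ) 0‖ * ‖F (l : ℤ) j‖ := by
      refine h1.congr fun j => ?_
      simp [Function.comp, norm_mul, mul_comm]
    exact (summable_mul_left_iff (by simpa using hGne (l : ℤ) 0)).1 h2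
  -- identification of the two factor sums with the statement's sums
  have hNeq : ∀ l : ℕ,
      (∑' N : {N : ℤ // N ≡ -((l : ℕ) : ℤ) ^ 2 [ZMOD 4 * m]},
          c (((N : ℤ) + ((l : ℕ) : ℤ) ^ 2) / (4 * m), ((l : ℕ) : ℤ)) * a (-(N : ℤ)) τ.im *
            Complex.exp (2 * Real.pi * Complex.I * (((N : ℤ) : ℂ) * τ / (4 * m))))
        = ∑' j : ℤ, F (l : ℤ) j := by
    intro l
    rw [← (residueEquiv (4 * m) (-((l : ℕ) : ℤ) ^ 2) h4m).tsum_eq]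
    refine tsum_congr fun j => ?_
    have hdiv : (-((l : ℕ) : ℤ) ^ 2 + 4 * m * j + ((l : ℕ) : ℤ) ^ 2) / (4 * m) = j := by
      rw [show -((l : ℕ) : ℤ) ^ 2 + 4 * m * j + ((l : ℕ) : ℤ) ^ 2 = 4 * m * j by ring,
        Int.mul_ediv_cancel_left _ h4m]
    have hneg : -(-((l : ℕ) : ℤ) ^ 2 + 4 * m * j) = ((l : ℕ) : ℤ) ^ 2 - 4 * m * j := by ring
    simp only [residueEquiv, Equiv.coe_fn_mk, hF, hdiv, hneg]
  have hReq : ∀ l : ℕ,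
      jacobiThetaML m ((l : ℕ) : ℤ) τ z = ∑' k : ℤ, G (l : ℤ) k := by
    intro l
    have h2m : (2 * m : ℤ) ≠ 0 := by omega
    rw [jacobiThetaML, ← (residueEquiv (2 * m) ((l : ℕ) : ℤ) h2m).tsum_eq]
    refine tsum_congr fun k => ?_
    simp only [residueEquiv, Equiv.coe_fn_mk, hG]
  -- summability conclusion (first conjunct)
  have hconj1 : ∀ l : ℕ, l < (2 * m).toNat →
      Summable fun N : {N : ℤ // N ≡ -(l : ℤ) ^ 2 [ZMOD 4 * m]} =>
        ‖c (((N : ℤ) + (l : ℤ) ^ 2) / (4 * m), (l : ℤ)) * a (-(N : ℤ)) τ.im *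
          Complex.exp (2 * Real.pi * Complex.I * (((N : ℤ) : ℂ) * τ / (4 * m)))‖ := by
    intro l hl
    refine ((residueEquiv (4 * m) (-(l : ℤ) ^ 2) h4m).summable_iff).1 ?_
    refine Summable.congr (hFsum ⟨l, hl⟩) fun j => ?_
    have hdiv : (-((l : ℕ) : ℤ) ^ 2 + 4 * m * j + ((l : ℕ) : ℤ) ^ 2) / (4 * m) = j := by
      rw [show -((l : ℕ) : ℤ) ^ 2 + 4 * m * j + ((l : ℕ) : ℤ) ^ 2 = 4 * m * j by ring,
        Int.mul_ediv_cancel_left _ h4m]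
    have hneg : -(-((l : ℕ) : ℤ) ^ 2 + 4 * m * j) = ((l : ℕ) : ℤ) ^ 2 - 4 * m * j := by ring
    simp only [Function.comp, residueEquiv, Equiv.coe_fn_mk, hF, hdiv, hneg]
  refine ⟨hconj1, ?_⟩
  -- main computation
  have hfEsum : Summable fun q : Fin (2 * m).toNat × ℤ × ℤ => f (E q) := hsumE.of_norm
  calc ∑' p : ℤ × ℤ, f p
      = ∑' q : Fin (2 * m).toNat × ℤ × ℤ, f (E q) := (E.tsum_eq f).symm
    _ = ∑' (l : Fin (2 * m).toNat), ∑' (jk : ℤ × ℤ), f (E (l, jk)) := by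
        exact Summable.tsum_prod hfEsum
    _ = ∑ l : Fin (2 * m).toNat, ∑' (jk : ℤ × ℤ), f (E (l, jk)) := tsum_fintype _
    _ = ∑ l : Fin (2 * m).toNat, (∑' j : ℤ, F (l : ℤ) j) * (∑' k : ℤ, G (l : ℤ) k) := by
        refine Finset.sum_congr rfl fun l _ => ?_
        have h1 : ∀ jk : ℤ × ℤ, f (E (l, jk)) = F (l : ℤ) jk.1 * G (l : ℤ) jk.2 := fun jk =>
          hfE (l, jk)
        rw [tsum_congr h1]
        by_cases hFzero : ∀ j : ℤ, F (l : ℤ) j = 0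
        · simp [hFzero]
        · push_neg at hFzero
          obtain ⟨j0, hj0⟩ := hFzero
          have hinj : Function.Injective (fun k : ℤ => ((j0, k) : ℤ × ℤ)) := by
            intro x y h; simpa using h
          have h2 := (hFG l).comp_injective hinj
          have h3 : Summable fun k : ℤ => ‖F (l : ℤ) j0‖ * ‖G (l : ℤ) k‖ := by
            refine h2.congr fun k => ?_
            simp [Function.comp, norm_mul]
          have hGsum : Summable fun k : ℤ => ‖G (l : ℤ) k‖ :=
            (summable_mul_left_iff (by simpa using hj0)).1 h3
          exact (tsum_mul_tsum_of_summable_norm (hFsum l) hGsum).symm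
    _ = ∑ l ∈ Finset.range (2 * m).toNat,
        (∑' N : {N : ℤ // N ≡ -(l : ℤ) ^ 2 [ZMOD 4 * m]},
            c (((N : ℤ) + (l : ℤ) ^ 2) / (4 * m), (l : ℤ)) * a (-(N : ℤ)) τ.im *
              Complex.exp (2 * Real.pi * Complex.I * (((N : ℤ) : ℂ) * τ / (4 * m)))) *
          jacobiThetaML m (l : ℤ) τ z := by
        rw [Fin.sum_univ_eq_sum_range
          (fun l : ℕ => (∑' j : ℤ, F (l : ℤ) j) * (∑' k : ℤ, G (l : ℤ) k)) ((2 * m).toNat)]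
        refine Finset.sum_congr rfl fun l _ => ?_
        rw [hNeq l, hReq l]
end
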